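/- arXiv:1509.04985 — 13 statements merged into one kernel-verified Lean document; each statement's English description precedes it below -/
import Mathlib

section
/- The space C_k(ω*, ω*) of continuous self-maps of the Stone–Čech remainder ω* of the natural numbers, equipped with the compact-open topology, is a Baire space. -/
open Set Filter Topology

attribute [local instance] Classical.propDecidable

noncomputable section OstSection

namespace Ost

/-- The space of nonprincipal ultrafilters on `ℕ`. -/
abbrev Om : Type := {u : Ultrafilter ℕ // u ∉ Set.range (pure : ℕ → Ultrafilter ℕ)}

/-! ### Basic clopen sets -/

def star (a : Set ℕ) : Set Om := {u : Om | a ∈ u.1}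

lemma mem_star {a : Set ℕ} {u : Om} : u ∈ star a ↔ a ∈ u.1 := Iff.rfl

lemma isOpen_star (a : Set ℕ) : IsOpen (star a) :=
  (ultrafilter_isOpen_basic a).preimage continuous_subtype_val

lemma isClosed_star (a : Set ℕ) : IsClosed (star a) :=
  (ultrafilter_isClosed_basic a).preimage continuous_subtype_val

lemma not_finite_mem {u : Om} {a : Set ℕ} (ha : a.Finite) : a ∉ u.1 := by
  intro h
  obtain ⟨x, -, hx⟩ := Ultrafilter.eq_pure_of_finite_mem ha h
  exact u.2 ⟨x, hx.symm⟩

lemma cofinite_mem {u : Om} {a : Set ℕ} (ha : aᶜ.Finite) : a ∈ u.1 := by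
  have := not_finite_mem (u := u) ha
  rwa [Ultrafilter.compl_mem_iff_notMem, not_not] at this

lemma star_mono {a b : Set ℕ} (h : a ⊆ b) : star a ⊆ star b :=
  fun _ hu => Filter.mem_of_superset hu h

lemma star_inter (a b : Set ℕ) : star (a ∩ b) = star a ∩ star b := by
  ext u; exact inter_mem_iff

lemma star_empty_of_finite {a : Set ℕ} (h : a.Finite) : star a = ∅ := by
  ext u; simp only [mem_star, Set.mem_empty_iff_false, iff_false]
  exact not_finite_mem h

lemma infinite_of_star_nonempty {a : Set ℕ} (h : (star a).Nonempty) : a.Infinite := by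
  by_contra hfin
  rw [Set.not_infinite] at hfin
  obtain ⟨u, hu⟩ := h
  exact not_finite_mem hfin hu

lemma star_nonempty {a : Set ℕ} (h : a.Infinite) : (star a).Nonempty := by
  have hne : (Filter.cofinite ⊓ 𝓟 a).NeBot := by
    refine Filter.inf_principal_neBot_iff.mpr ?_
    intro U hU
    have : (a \ Uᶜ).Nonempty := (h.diff hU).nonempty
    obtain ⟨x, hxa, hxU⟩ := this
    exact ⟨x, not_not.mp hxU, hxa⟩
  let u : Ultrafilter ℕ := Ultrafilter.of (Filter.cofinite ⊓ 𝓟 a)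
  have hle : (u : Filter ℕ) ≤ Filter.cofinite ⊓ 𝓟 a := Ultrafilter.of_le _
  have hau : a ∈ u := by
    have : (u : Filter ℕ) ≤ 𝓟 a := hle.trans inf_le_right
    exact Filter.le_principal_iff.mp this
  have hnp : u ∉ Set.range (pure : ℕ → Ultrafilter ℕ) := by
    rintro ⟨x, hx⟩
    have h1 : ({x}ᶜ : Set ℕ) ∈ u := by
      have : ({x}ᶜ : Set ℕ) ∈ Filter.cofinite := by
        simp [Filter.mem_cofinite]
      exact (hle.trans inf_le_left) this
    rw [← hx] at h1
    simp at h1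
  exact ⟨⟨u, hnp⟩, hau⟩

lemma star_eq_of_diff_finite {a b : Set ℕ} (hab : (a \ b).Finite) (hba : (b \ a).Finite) :
    star a = star b := by
  have key : ∀ x y : Set ℕ, (x \ y).Finite → star x ⊆ star y := by
    intro x y hxy u hu
    have h1 : (x \ y)ᶜ ∈ u.1 := by
      rw [Ultrafilter.compl_mem_iff_notMem]
      exact not_finite_mem hxy
    have : x ∩ (x \ y)ᶜ ∈ u.1 := inter_mem hu h1
    refine Filter.mem_of_superset this ?_
    intro k hk
    rcases hk with ⟨hkx, hk2⟩
    by_contra hky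
    exact hk2 ⟨hkx, hky⟩
  exact le_antisymm (key a b hab) (key b a hba)

/-- `Om` is a closed subspace of the compact space of ultrafilters. -/
lemma isClosed_om : IsClosed {u : Ultrafilter ℕ | u ∉ Set.range (pure : ℕ → Ultrafilter ℕ)} := by
  rw [← isOpen_compl_iff]
  have : {u : Ultrafilter ℕ | u ∉ Set.range (pure : ℕ → Ultrafilter ℕ)}ᶜ
      = ⋃ n : ℕ, {u : Ultrafilter ℕ | ({n} : Set ℕ) ∈ u} := by
    ext u
    simp only [Set.mem_compl_iff, Set.mem_setOf_eq, not_not, Set.mem_iUnion, Set.mem_range]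
    constructor
    · rintro ⟨n, rfl⟩; exact ⟨n, singleton_mem_pure⟩
    · rintro ⟨n, hn⟩
      obtain ⟨x, hx, hux⟩ := Ultrafilter.eq_pure_of_finite_mem (Set.finite_singleton n) hn
      exact ⟨x, hux.symm⟩
  rw [this]
  exact isOpen_iUnion fun n => ultrafilter_isOpen_basic _

instance : CompactSpace Om := isCompact_iff_compactSpace.mp isClosed_om.isCompact

lemma isCompact_star (a : Set ℕ) : IsCompact (star a) := (isClosed_star a).isCompact

/-- Every point of an open subset of `Om` has a basic neighborhood inside it. -/
lemma exists_star_mem_subset {U : Set Om} (hU : IsOpen U) {u : Om} (hu : u ∈ U) :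
    ∃ b : Set ℕ, u ∈ star b ∧ star b ⊆ U := by
  rw [isOpen_induced_iff] at hU
  obtain ⟨O, hO, rfl⟩ := hU
  obtain ⟨t, ht, hut, htO⟩ := ultrafilterBasis_is_basis.exists_subset_of_mem_open hu hO
  obtain ⟨b, rfl⟩ := ht
  exact ⟨b, hut, fun v hv => htO hv⟩

/-- Every clopen subset of `Om` is a basic set. -/
lemma exists_star_of_isClopen {C : Set Om} (hC : IsClopen C) : ∃ a : Set ℕ, C = star a := by
  have hcov : ∀ u : {x // x ∈ C}, ∃ b : Set ℕ, (u : Om) ∈ star b ∧ star b ⊆ C :=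
    fun u => exists_star_mem_subset hC.2 u.2
  choose b hb1 hb2 using hcov
  have hKC : IsCompact C := hC.1.isCompact
  have hsub : C ⊆ ⋃ u : {x // x ∈ C}, star (b u) := by
    intro x hx
    exact Set.mem_iUnion.mpr ⟨⟨x, hx⟩, hb1 ⟨x, hx⟩⟩
  obtain ⟨t, ht⟩ := hKC.elim_finite_subcover (fun u : {x // x ∈ C} => star (b u))
    (fun u => isOpen_star _) hsub
  refine ⟨⋃ u ∈ (↑t : Set {x // x ∈ C}), b u, ?_⟩
  ext x
  rw [mem_star, Ultrafilter.finite_biUnion_mem_iff t.finite_toSet]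
  constructor
  · intro hx
    obtain ⟨u, hut, hxu⟩ := Set.mem_iUnion₂.mp (ht hx)
    exact ⟨u, hut, hxu⟩
  · rintro ⟨u, hut, hbu⟩
    exact hb2 u hbu

/-! ### Finite partition conditions -/

structure Cond where
  ι : Type
  [fin : Fintype ι]
  c : ι → Set ℕ
  s : ι → Set ℕ
  disj : ∀ ⦃i j : ι⦄, i ≠ j → c i ∩ c j = ∅
  cover : ∀ k : ℕ, ∃ i, k ∈ c i
  inf : ∀ i, (s i).Infinite

attribute [instance] Cond.fin

/-- The basic set of self-maps determined by a condition. -/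
def B (K : Cond) : Set C(Om, Om) :=
  {h : C(Om, Om) | ∀ i, Set.MapsTo h (star (K.c i)) (star (K.s i))}

lemma Cond.exists_c_mem (K : Cond) (u : Om) : ∃ i, K.c i ∈ u.1 := by
  by_contra hcon
  push_neg at hcon
  have hall : ∀ i, (K.c i)ᶜ ∈ u.1 := fun i =>
    Ultrafilter.compl_mem_iff_notMem.mpr (hcon i)
  have hint : (⋂ i, (K.c i)ᶜ) ∈ u.1 := Filter.iInter_mem.mpr hall
  have hemp : (⋂ i, (K.c i)ᶜ) = ∅ := by
    ext k
    simp only [Set.mem_iInter, Set.mem_compl_iff, Set.mem_empty_iff_false, iff_false, not_forall,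
      not_not]
    exact K.cover k
  rw [hemp] at hint
  exact Ultrafilter.empty_notMem hint

lemma Cond.c_unique (K : Cond) {u : Om} {i j : K.ι} (hi : K.c i ∈ u.1) (hj : K.c j ∈ u.1) :
    i = j := by
  by_contra hij
  have : K.c i ∩ K.c j ∈ u.1 := inter_mem hi hj
  rw [K.disj hij] at this
  exact Ultrafilter.empty_notMem this

lemma Cond.k_unique (K : Cond) {k : ℕ} {i j : K.ι} (hi : k ∈ K.c i) (hj : k ∈ K.c j) : i = j := by
  by_contra hij
  have : k ∈ K.c i ∩ K.c j := ⟨hi, hj⟩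
  rw [K.disj hij] at this
  exact this

/-- The index of the piece of the partition an ultrafilter belongs to. -/
def Cond.index (K : Cond) (u : Om) : K.ι := (K.exists_c_mem u).choose

lemma Cond.index_spec (K : Cond) (u : Om) : K.c (K.index u) ∈ u.1 := (K.exists_c_mem u).choose_spec

lemma Cond.index_eq (K : Cond) {u : Om} {i : K.ι} (hi : K.c i ∈ u.1) : K.index u = i :=
  K.c_unique (K.index_spec u) hi

lemma isOpen_B (K : Cond) : IsOpen (B K) := by
  have : B K = ⋂ i, {h : C(Om, Om) | Set.MapsTo h (star (K.c i)) (star (K.s i))} := by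
    ext h; simp [B, Set.mem_iInter]
  rw [this]
  exact isOpen_iInter_of_finite fun i =>
    ContinuousMap.isOpen_setOf_mapsTo (isCompact_star _) (isOpen_star _)

lemma nonempty_B (K : Cond) : (B K).Nonempty := by
  have hv : ∀ i : K.ι, ∃ v : Om, v ∈ star (K.s i) := fun i => star_nonempty (K.inf i)
  choose v hvmem using hv
  have hcont : Continuous (fun u : Om => v (K.index u)) := by
    rw [continuous_def]
    intro O hO
    have : (fun u : Om => v (K.index u)) ⁻¹' O = ⋃ i ∈ {i : K.ι | v i ∈ O}, star (K.c i) := by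
      ext u
      simp only [Set.mem_preimage, Set.mem_iUnion, Set.mem_setOf_eq, exists_prop]
      constructor
      · intro hu
        exact ⟨K.index u, hu, K.index_spec u⟩
      · rintro ⟨i, hiO, hic⟩
        rwa [K.index_eq hic]
    rw [this]
    exact isOpen_biUnion fun i _ => isOpen_star _
  refine ⟨⟨_, hcont⟩, ?_⟩
  intro i u hu
  have := K.index_eq (u := u) hu
  simp only [ContinuousMap.coe_mk]
  rw [this]
  exact hvmem i

/-- Refinement order on conditions (with explicit set containments). -/
def Cond.Le (K' K : Cond) : Prop :=
  ∃ r : K'.ι → K.ι, (∀ j, K'.c j ⊆ K.c (r j)) ∧ (∀ j, K'.s j ⊆ K.s (r j))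

lemma B_mono {K' K : Cond} (h : K'.Le K) : B K' ⊆ B K := by
  obtain ⟨r, hc, hs⟩ := h
  intro f hf i u hu
  have hj : K'.c (K'.index u) ∈ u.1 := K'.index_spec u
  set j := K'.index u
  have h1 : K.c (r j) ∈ u.1 := Filter.mem_of_superset hj (hc j)
  have h2 : r j = i := K.c_unique h1 hu
  have := hf j hj
  rw [mem_star] at this ⊢
  refine Filter.mem_of_superset this ?_
  rw [← h2]
  exact hs j

/-- The trivial condition. -/
def trivCond : Cond where
  ι := PUnit
  c := fun _ => Set.univ
  s := fun _ => Set.univ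
  disj := fun i j hij => absurd rfl hij
  cover := fun k => ⟨PUnit.unit, trivial⟩
  inf := fun _ => Set.infinite_univ

lemma B_trivCond : B trivCond = Set.univ := by
  ext h
  simp only [B, Set.mem_setOf_eq, Set.mem_univ, iff_true]
  intro i u hu
  have : (Set.univ : Set ℕ) ∈ (h u).1 := Filter.univ_mem
  exact this

/-! ### More star lemmas -/

lemma star_compl (a : Set ℕ) : star aᶜ = (star a)ᶜ := by
  ext u
  simp only [mem_star, Set.mem_compl_iff]
  exact Ultrafilter.compl_mem_iff_notMem

lemma finite_of_star_empty {a : Set ℕ} (h : star a = ∅) : a.Finite := by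
  by_contra hinf
  obtain ⟨u, hu⟩ := star_nonempty hinf
  rw [h] at hu
  exact hu

lemma star_iUnion {ι : Type} [Fintype ι] (d : ι → Set ℕ) :
    star (⋃ p, d p) = ⋃ p, star (d p) := by
  ext u
  simp only [Set.mem_iUnion, mem_star]
  rw [show (⋃ p, d p) = ⋃ p ∈ (Set.univ : Set ι), d p by simp]
  rw [Ultrafilter.finite_biUnion_mem_iff Set.finite_univ]
  simp

/-! ### Covering lemma -/

lemma cover_lemma {g : C(Om, Om)} {Kc U : Set Om} (hK : IsCompact Kc) (hU : IsOpen U)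
    (hg : Set.MapsTo g Kc U) :
    ∃ A : Set (Set ℕ), A.Finite ∧ (∀ a ∈ A, star a ⊆ U) ∧ Kc ⊆ ⋃ a ∈ A, g ⁻¹' star a := by
  have hx : ∀ x : {y // y ∈ Kc}, ∃ b : Set ℕ, g x.1 ∈ star b ∧ star b ⊆ U :=
    fun x => exists_star_mem_subset hU (hg x.2)
  choose b hb1 hb2 using hx
  obtain ⟨t, ht⟩ := hK.elim_finite_subcover (fun x : {y // y ∈ Kc} => g ⁻¹' star (b x))
    (fun x => (isOpen_star _).preimage g.continuous)
    (fun x hxK => Set.mem_iUnion.mpr ⟨⟨x, hxK⟩, hb1 ⟨x, hxK⟩⟩)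
  refine ⟨b '' ↑t, t.finite_toSet.image b, ?_, ?_⟩
  · rintro a ⟨x, hx, rfl⟩
    exact hb2 x
  · intro x hxK
    obtain ⟨u, hut, hxu⟩ := Set.mem_iUnion₂.mp (ht hxK)
    exact Set.mem_biUnion (Set.mem_image_of_mem b (Finset.mem_coe.mpr hut)) hxu

/-! ### Disjointification -/

lemma disjointify {ι : Type} [Fintype ι] [Nonempty ι] (d : ι → Set ℕ)
    (hd : ∀ ⦃p q : ι⦄, p ≠ q → (d p ∩ d q).Finite) (hc : ((⋃ p, d p)ᶜ).Finite) :
    ∃ d' : ι → Set ℕ, (∀ ⦃p q : ι⦄, p ≠ q → d' p ∩ d' q = ∅) ∧ (∀ k, ∃ p, k ∈ d' p) ∧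
      ∀ p, star (d' p) = star (d p) := by
  let e := Fintype.equivFin ι
  let p₀ : ι := Classical.arbitrary ι
  refine ⟨fun p => {k | k ∈ d p ∧ ∀ q, e q < e p → k ∉ d q} ∪
      {k | p = p₀ ∧ ∀ q, k ∉ d q}, ?_, ?_, ?_⟩
  · intro p q hpq
    ext k
    simp only [Set.mem_inter_iff, Set.mem_union, Set.mem_setOf_eq, Set.mem_empty_iff_false,
      iff_false, not_and]
    rintro (⟨hkp, hminp⟩ | ⟨rfl, hnone⟩)
    · rintro (⟨hkq, hminq⟩ | ⟨rfl, hnone⟩)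
      · rcases lt_trichotomy (e p) (e q) with hlt | heq | hgt
        · exact hminq p hlt hkp
        · exact hpq (e.injective heq)
        · exact hminp q hgt hkq
      · exact hnone p hkp
    · rintro (⟨hkq, hminq⟩ | ⟨h1, h2⟩)
      · exact hnone q hkq
      · exact hpq (h1.symm.trans rfl) -- p = p₀ and q = p₀ means p = q
  · intro k
    by_cases hall : ∀ q, k ∉ d q
    · exact ⟨p₀, Or.inr ⟨rfl, hall⟩⟩
    · push_neg at hall
      have hT : (Finset.univ.filter fun q : ι => k ∈ d q).Nonempty := by
        obtain ⟨q, hq⟩ := hall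
        exact ⟨q, Finset.mem_filter.mpr ⟨Finset.mem_univ q, hq⟩⟩
      obtain ⟨p, hpT, hmin⟩ := Finset.exists_min_image _ (fun q => e q) hT
      refine ⟨p, Or.inl ⟨(Finset.mem_filter.mp hpT).2, ?_⟩⟩
      intro q hq hkq
      have hqT : q ∈ Finset.univ.filter fun q : ι => k ∈ d q :=
        Finset.mem_filter.mpr ⟨Finset.mem_univ q, hkq⟩
      exact absurd (hmin q hqT) (not_le.mpr hq)
  · intro p
    apply star_eq_of_diff_finite
    · -- extra part is outside all d q
      have : ({k | k ∈ d p ∧ ∀ q, e q < e p → k ∉ d q} ∪ {k | p = p₀ ∧ ∀ q, k ∉ d q}) \ d p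
          ⊆ (⋃ q, d q)ᶜ := by
        rintro k ⟨hk1 | hk2, hk2'⟩
        · exact absurd hk1.1 hk2'
        · simp only [Set.mem_compl_iff, Set.mem_iUnion, not_exists]
          exact fun q => hk2.2 q
      exact hc.subset this
    · -- d p minus the new set is inside a finite union of pairwise intersections
      have : d p \ ({k | k ∈ d p ∧ ∀ q, e q < e p → k ∉ d q} ∪ {k | p = p₀ ∧ ∀ q, k ∉ d q})
          ⊆ ⋃ q, if e q < e p then d p ∩ d q else ∅ := by
        intro k hk
        rcases hk with ⟨hkp, hk2⟩
        simp only [Set.mem_union, Set.mem_setOf_eq, not_or, not_and, not_forall] at hk2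
        obtain ⟨q, hq, hkq⟩ := hk2.1 hkp
        rw [not_not] at hkq
        refine Set.mem_iUnion.mpr ⟨q, ?_⟩
        rw [if_pos hq]
        exact ⟨hkp, hkq⟩
      refine (Set.finite_iUnion ?_).subset this
      intro q
      by_cases hq : e q < e p
      · rw [if_pos hq]
        refine hd ?_
        intro h; rw [h] at hq; exact lt_irrefl _ hq
      · rw [if_neg hq]
        exact Set.finite_empty

/-! ### The step lemma -/

lemma step (K : Cond) (V : Set C(Om, Om)) (hV : IsOpen V) (hne : (V ∩ B K).Nonempty) :
    ∃ K' : Cond, K'.Le K ∧ B K' ⊆ V ∩ B K := by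
  classical
  obtain ⟨g, hgV, hgB⟩ := hne
  -- find a basic (finite intersection of subbasic) neighborhood of `g` inside `V`
  obtain ⟨W, hWmem, hgW, hWV⟩ :=
    (TopologicalSpace.isTopologicalBasis_of_subbasis
      (ContinuousMap.compactOpen_eq (X := Om) (Y := Om))).exists_subset_of_mem_open hgV hV
  obtain ⟨Fam, ⟨hFamfin, hFamsub⟩, rfl⟩ := hWmem
  haveI : Finite ↥Fam := hFamfin.to_subtype
  haveI : Fintype ↥Fam := Fintype.ofFinite _
  have hdata : ∀ T : ↥Fam, ∃ Kc U : Set Om,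
      IsCompact Kc ∧ IsOpen U ∧ (T : Set C(Om, Om)) = {f : C(Om, Om) | Set.MapsTo f Kc U} := by
    rintro ⟨T, hT⟩
    obtain ⟨Kc, hKc, U, hU, hTeq⟩ := Set.mem_image2.mp (hFamsub hT)
    exact ⟨Kc, U, hKc, hU, hTeq.symm⟩
  choose KC UU hKC hUU hTeq using hdata
  have hgT : ∀ T : ↥Fam, Set.MapsTo g (KC T) (UU T) := by
    intro T
    have := hgW T.1 T.2
    rw [hTeq T] at this
    exact this
  -- covering data for each subbasic constraint
  have hcov : ∀ T : ↥Fam, ∃ A : Set (Set ℕ), A.Finite ∧ (∀ a ∈ A, star a ⊆ UU T) ∧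
      KC T ⊆ ⋃ a ∈ A, g ⁻¹' star a :=
    fun T => cover_lemma (hKC T) (hUU T) (hgT T)
  choose AJ hAJfin hAJsub hAJcov using hcov
  -- the global finite family of target sets
  have hA : (⋃ T : ↥Fam, AJ T).Finite := Set.finite_iUnion hAJfin
  set N := hA.toFinset.card with hN
  let eN := hA.toFinset.equivFin
  let b : Fin N → Set ℕ := fun l => (eN.symm l).1
  have hbmem : ∀ a ∈ ⋃ T : ↥Fam, AJ T, ∃ l, b l = a := by
    intro a ha
    refine ⟨eN ⟨a, hA.mem_toFinset.mpr ha⟩, ?_⟩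
    simp [b]
  -- atoms of the family `b`
  let t : (Fin N → Bool) → Set ℕ := fun p => {k | ∀ l, k ∈ b l ↔ p l = true}
  have at1 : ∀ k : ℕ, ∃ p, k ∈ t p := by
    intro k
    refine ⟨fun l => decide (k ∈ b l), ?_⟩
    intro l
    simp [t]
  have at2 : ∀ ⦃p q : Fin N → Bool⦄, p ≠ q → t p ∩ t q = ∅ := by
    intro p q hpq
    ext k
    simp only [Set.mem_inter_iff, Set.mem_empty_iff_false, iff_false, not_and]
    intro h1 h2
    apply hpq
    funext l
    have := ((h1 l).symm.trans (h2 l))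
    cases hp : p l <;> cases hq : q l
    · rfl
    · rw [hp, hq] at this; simp at this
    · rw [hp, hq] at this; simp at this
    · rfl
  have at3 : ∀ (p : Fin N → Bool) (l : Fin N), p l = true → t p ⊆ b l := by
    intro p l hpl k hk
    exact (hk l).mpr hpl
  have at4 : ∀ (p : Fin N → Bool) (l : Fin N), p l = false → t p ⊆ (b l)ᶜ := by
    intro p l hpl k hk hkb
    have := (hk l).mp hkb
    rw [hpl] at this
    exact Bool.false_ne_true this
  have atU : (⋃ p, t p) = Set.univ := by
    ext k
    simp only [Set.mem_iUnion, Set.mem_univ, iff_true]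
    exact at1 k
  -- domain-side representatives
  have hdrep : ∀ p : Fin N → Bool, ∃ dp : Set ℕ, g ⁻¹' star (t p) = star dp := by
    intro p
    obtain ⟨a, ha⟩ := exists_star_of_isClopen (C := g ⁻¹' star (t p))
      ⟨(isClosed_star _).preimage g.continuous, (isOpen_star _).preimage g.continuous⟩
    exact ⟨a, ha⟩
  choose d hd using hdrep
  have hstard : ∀ p, star (d p) = g ⁻¹' star (t p) := fun p => (hd p).symm
  -- disjointify the `d`'s
  have hdisj : ∀ ⦃p q : Fin N → Bool⦄, p ≠ q → (d p ∩ d q).Finite := by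
    intro p q hpq
    apply finite_of_star_empty
    rw [star_inter, hstard, hstard, ← Set.preimage_inter, ← star_inter, at2 hpq,
      star_empty_of_finite Set.finite_empty, Set.preimage_empty]
  have hdcover : ((⋃ p, d p)ᶜ).Finite := by
    apply finite_of_star_empty
    rw [star_compl, star_iUnion]
    have : (⋃ p, star (d p)) = Set.univ := by
      have : (⋃ p, star (d p)) = g ⁻¹' (⋃ p, star (t p)) := by
        rw [Set.preimage_iUnion]
        exact Set.iUnion_congr hstard
      rw [this, ← star_iUnion, atU]
      ext u
      simp only [Set.mem_preimage, mem_star, Set.mem_univ, iff_true]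
      exact Filter.univ_mem
    rw [this, Set.compl_univ]
  obtain ⟨d', hd'disj, hd'cover, hd'star⟩ := disjointify d hdisj hdcover
  -- the new condition
  have hdisj' : ∀ ⦃ip jq : K.ι × (Fin N → Bool)⦄, ip ≠ jq →
      (K.c ip.1 ∩ d' ip.2) ∩ (K.c jq.1 ∩ d' jq.2) = ∅ := by
    rintro ⟨i, p⟩ ⟨j, q⟩ hne'
    by_cases hij : i = j
    · subst hij
      have hpq : p ≠ q := fun h => hne' (by rw [h])
      apply Set.eq_empty_of_subset_empty
      rw [← hd'disj hpq]
      exact fun k hk => ⟨hk.1.2, hk.2.2⟩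
    · apply Set.eq_empty_of_subset_empty
      rw [← K.disj hij]
      exact fun k hk => ⟨hk.1.1, hk.2.1⟩
  let K' : Cond :=
    { ι := K.ι × (Fin N → Bool)
      c := fun ip => K.c ip.1 ∩ d' ip.2
      s := fun ip => if (K.s ip.1 ∩ t ip.2).Infinite then K.s ip.1 ∩ t ip.2 else K.s ip.1
      disj := hdisj'
      cover := by
        intro k
        obtain ⟨i, hi⟩ := K.cover k
        obtain ⟨p, hp⟩ := hd'cover k
        exact ⟨⟨i, p⟩, hi, hp⟩
      inf := by
        rintro ⟨i, p⟩
        by_cases h : (K.s i ∩ t p).Infinite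
        · simp only [if_pos h]; exact h
        · simp only [if_neg h]; exact K.inf i }
  have hLe : K'.Le K := by
    refine ⟨Prod.fst, fun j => Set.inter_subset_left, fun j => ?_⟩
    show (if (K.s j.1 ∩ t j.2).Infinite then K.s j.1 ∩ t j.2 else K.s j.1) ⊆ K.s j.1
    by_cases h : (K.s j.1 ∩ t j.2).Infinite
    · simp only [if_pos h]; exact Set.inter_subset_left
    · simp only [if_neg h]; exact subset_rfl
  refine ⟨K', hLe, ?_⟩
  intro h hh
  refine ⟨hWV ?_, B_mono hLe hh⟩
  intro T hT
  have hTrw : (T : Set C(Om, Om)) = {f : C(Om, Om) | Set.MapsTo f (KC ⟨T, hT⟩) (UU ⟨T, hT⟩)} :=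
    hTeq ⟨T, hT⟩
  rw [hTrw]
  intro u huK
  obtain ⟨a, haA, hua⟩ := Set.mem_iUnion₂.mp (hAJcov ⟨T, hT⟩ huK)
  obtain ⟨l, hbl⟩ := hbmem a (Set.mem_iUnion.mpr ⟨⟨T, hT⟩, haA⟩)
  have hgu_bl : g u ∈ star (b l) := by rw [hbl]; exact hua
  have hblU : star (b l) ⊆ UU ⟨T, hT⟩ := by rw [hbl]; exact hAJsub ⟨T, hT⟩ a haA
  obtain ⟨⟨i, p⟩, hip⟩ := K'.exists_c_mem u
  have huc : u ∈ star (K'.c (i, p)) := hip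
  have hucK : u ∈ star (K.c i) := star_mono Set.inter_subset_left huc
  have hud' : u ∈ star (d' p) := star_mono Set.inter_subset_right huc
  have hud : u ∈ star (d p) := by rw [← hd'star p]; exact hud'
  have hgtp : g u ∈ star (t p) := by
    have hpre : u ∈ (⇑g) ⁻¹' star (t p) := by rw [← hstard p]; exact hud
    exact hpre
  have hpl : p l = true := by
    by_contra hplf
    have hplf' : p l = false := by
      cases hpl' : p l
      · rfl
      · exact absurd hpl' hplf
    have hsub := at4 p l hplf'
    have h2 : g u ∈ (star (b l))ᶜ := by
      rw [← star_compl]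
      exact star_mono hsub hgtp
    exact h2 hgu_bl
  have hgsi : g u ∈ star (K.s i) := hgB i hucK
  have hinf : (K.s i ∩ t p).Infinite := by
    apply infinite_of_star_nonempty
    rw [star_inter]
    exact ⟨g u, hgsi, hgtp⟩
  have hs'eq : K'.s (i, p) = K.s i ∩ t p := by
    show (if (K.s i ∩ t p).Infinite then K.s i ∩ t p else K.s i) = _
    rw [if_pos hinf]
  have hhu : h u ∈ star (K'.s (i, p)) := hh (i, p) huc
  rw [hs'eq, star_inter] at hhu
  exact hblU (star_mono (at3 p l hpl) hhu.2)

/-! ### The induced map of an `ℕ → ℕ` map -/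

lemma continuous_ultrafilter_map (F : ℕ → ℕ) : Continuous (Ultrafilter.map F) := by
  apply continuous_generateFrom_iff.mpr
  rintro S ⟨a, rfl⟩
  have : Ultrafilter.map F ⁻¹' {u : Ultrafilter ℕ | a ∈ u} = {u : Ultrafilter ℕ | F ⁻¹' a ∈ u} := by
    ext u
    exact Ultrafilter.mem_map
  rw [this]
  exact ultrafilter_isOpen_basic _

/-! ### The main theorem for `Om` -/

theorem baireSpace_Om : BaireSpace C(Om, Om) := by
  constructor
  intro f ho hd
  rw [dense_iff_inter_open]
  intro V hV hVne
  have hstep : ∀ (K : Cond) (n : ℕ), ∃ K' : Cond, K'.Le K ∧ B K' ⊆ f n ∩ B K := by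
    intro K n
    apply step K (f n) (ho n)
    obtain ⟨x, hx⟩ := (dense_iff_inter_open.mp (hd n)) (B K) (isOpen_B K) (nonempty_B K)
    exact ⟨x, hx.2, hx.1⟩
  choose Step hStepLe hStepSub using hstep
  obtain ⟨K₀, hK₀Le, hK₀sub⟩ := step trivCond V hV
    (by rw [B_trivCond, Set.inter_univ]; exact hVne)
  let Kseq : ℕ → Cond := fun n => Nat.rec K₀ (fun n K => Step K n) n
  have hle : ∀ n, (Kseq (n + 1)).Le (Kseq n) := fun n => hStepLe (Kseq n) n
  have hsub : ∀ n, B (Kseq (n + 1)) ⊆ f n ∩ B (Kseq n) := fun n => hStepSub (Kseq n) n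
  have hidx : ∀ (K : Cond) (k : ℕ), ∃ i, k ∈ K.c i := fun K k => K.cover k
  choose idx hidxmem using hidx
  -- transferring pieces along the chain
  have key : ∀ n i k, k ∈ (Kseq n).c i → ∀ m, n ≤ m →
      ∃ i', k ∈ (Kseq m).c i' ∧ (Kseq m).s i' ⊆ (Kseq n).s i := by
    intro n i k hk m hm
    induction m, hm using Nat.le_induction with
    | base => exact ⟨i, hk, subset_rfl⟩
    | succ m hm ih =>
      obtain ⟨i', hki', hsub'⟩ := ih
      obtain ⟨r, hrc, hrs⟩ := hle m
      obtain ⟨j, hj⟩ := (Kseq (m + 1)).cover k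
      have hkr : k ∈ (Kseq m).c (r j) := hrc j hj
      have hrj : r j = i' := (Kseq m).k_unique hkr hki'
      refine ⟨j, hj, ?_⟩
      have := hrs j
      rw [hrj] at this
      exact this.trans hsub'
  -- the diagonal function
  have hFex : ∀ k : ℕ, ∃ v, v ∈ (Kseq k).s (idx (Kseq k) k) ∧ k < v := by
    intro k
    obtain ⟨v, hv1, hv2⟩ := ((Kseq k).inf (idx (Kseq k) k)).exists_gt k
    exact ⟨v, hv1, hv2⟩
  choose F hF1 hF2 using hFex
  have hFkey : ∀ n i k, n ≤ k → k ∈ (Kseq n).c i → F k ∈ (Kseq n).s i := by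
    intro n i k hnk hk
    obtain ⟨i', hki', hsub'⟩ := key n i k hk k hnk
    have heq : idx (Kseq k) k = i' := (Kseq k).k_unique (hidxmem (Kseq k) k) hki'
    have hF := hF1 k
    rw [heq] at hF
    exact hsub' hF
  -- the induced continuous self-map of Om
  have hgnp : ∀ u : Om, Ultrafilter.map F u.1 ∉ Set.range (pure : ℕ → Ultrafilter ℕ) := by
    rintro u ⟨x, hx⟩
    have h1 : ({x} : Set ℕ) ∈ Ultrafilter.map F u.1 := by
      rw [← hx]; exact singleton_mem_pure
    have h2 : F ⁻¹' {x} ∈ u.1 := Ultrafilter.mem_map.mp h1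
    have h3 : (F ⁻¹' {x}).Finite := by
      apply (Set.finite_Iic x).subset
      intro k hk
      simp only [Set.mem_preimage, Set.mem_singleton_iff] at hk
      have := hF2 k
      rw [hk] at this
      exact Set.mem_Iic.mpr (le_of_lt this)
    exact not_finite_mem h3 h2
  let gfun : Om → Om := fun u => ⟨Ultrafilter.map F u.1, hgnp u⟩
  have hgc : Continuous gfun :=
    Continuous.subtype_mk ((continuous_ultrafilter_map F).comp continuous_subtype_val) _
  let g : C(Om, Om) := ⟨gfun, hgc⟩
  have hgmem : ∀ n, g ∈ B (Kseq n) := by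
    intro n i u hu
    rw [mem_star] at hu ⊢
    show (Kseq n).s i ∈ Ultrafilter.map F u.1
    rw [Ultrafilter.mem_map]
    have hfin : ({k : ℕ | n ≤ k}ᶜ).Finite := by
      apply (Set.finite_Iio n).subset
      intro k hk
      simp only [Set.mem_compl_iff, Set.mem_setOf_eq, not_le] at hk
      exact hk
    have h1 : (Kseq n).c i ∩ {k | n ≤ k} ∈ u.1 := inter_mem hu (cofinite_mem hfin)
    refine Filter.mem_of_superset h1 ?_
    rintro k ⟨hk1, hk2⟩
    exact hFkey n i k hk2 hk1
  refine ⟨g, ?_, ?_⟩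
  · exact (hK₀sub (hgmem 0)).1
  · rw [Set.mem_iInter]
    intro n
    exact (hsub n (hgmem (n + 1))).1

/-! ### Transfer to the Stone–Čech remainder -/

def qmap (u : Ultrafilter ℕ) : StoneCech ℕ := T2Quotient.mk (Quot.mk _ u : PreStoneCech ℕ)

lemma continuous_qmap : Continuous qmap := (T2Quotient.continuous_mk _).comp continuous_quot_mk

lemma qmap_pure (n : ℕ) : qmap (pure n) = stoneCechUnit n := rfl

lemma continuous_pure' : Continuous (pure : ℕ → Ultrafilter ℕ) := continuous_of_discreteTopology

def Emap : StoneCech ℕ → Ultrafilter ℕ := stoneCechExtend continuous_pure'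

lemma continuous_Emap : Continuous Emap := continuous_stoneCechExtend _

lemma Emap_unit (n : ℕ) : Emap (stoneCechUnit n) = pure n :=
  congrFun (stoneCechExtend_extends continuous_pure') n

lemma Emap_qmap (u : Ultrafilter ℕ) : Emap (qmap u) = u := by
  have h : Emap ∘ qmap = id := by
    apply Continuous.ext_on denseRange_pure (continuous_Emap.comp continuous_qmap) continuous_id
    rintro _ ⟨n, rfl⟩
    show Emap (qmap (pure n)) = pure n
    rw [qmap_pure]
    exact Emap_unit n
  exact congrFun h u

lemma qmap_Emap (x : StoneCech ℕ) : qmap (Emap x) = x := by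
  have h : qmap ∘ Emap = id := by
    apply Continuous.ext_on denseRange_stoneCechUnit (continuous_qmap.comp continuous_Emap)
      continuous_id
    rintro _ ⟨n, rfl⟩
    show qmap (Emap (stoneCechUnit n)) = stoneCechUnit n
    rw [Emap_unit, qmap_pure]
  exact congrFun h x

def equivUS : Ultrafilter ℕ ≃ StoneCech ℕ :=
  ⟨qmap, Emap, Emap_qmap, qmap_Emap⟩

def homeoUS : Ultrafilter ℕ ≃ₜ StoneCech ℕ :=
  Continuous.homeoOfEquivCompactToT2 (f := equivUS) continuous_qmap

lemma homeoUS_iff (u : Ultrafilter ℕ) :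
    u ∉ Set.range (pure : ℕ → Ultrafilter ℕ) ↔ homeoUS u ∉ Set.range stoneCechUnit := by
  apply not_congr
  constructor
  · rintro ⟨n, rfl⟩
    exact ⟨n, (qmap_pure n).symm⟩
  · rintro ⟨n, hn⟩
    refine ⟨n, ?_⟩
    have : Emap (stoneCechUnit n) = Emap (homeoUS u) := by rw [hn]
    rw [Emap_unit] at this
    have h2 : Emap (homeoUS u) = u := Emap_qmap u
    rw [h2] at this
    exact this

lemma baireSpace_of_homeomorph {X Y : Type} [TopologicalSpace X] [TopologicalSpace Y]
    (e : X ≃ₜ Y) (hX : BaireSpace X) : BaireSpace Y := by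
  constructor
  intro f ho hd
  have h1 : ∀ n, IsOpen (e ⁻¹' f n) := fun n => (ho n).preimage e.continuous
  have h2 : ∀ n, Dense (e ⁻¹' f n) := by
    intro n
    rw [← Homeomorph.image_symm]
    exact e.symm.surjective.denseRange.dense_image e.symm.continuous (hd n)
  have h3 : Dense (⋂ n, e ⁻¹' f n) := hX.baire_property _ h1 h2
  rw [← Set.preimage_iInter] at h3
  have := e.surjective.denseRange.dense_image e.continuous h3
  rwa [e.image_preimage] at this

end Ost

end OstSection

/-- `ω*`, the Stone–Čech remainder of the natural numbers: the subspace of points of the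
Stone–Čech compactification of the discrete space `ℕ` that are not in the image of `ℕ`. -/
abbrev OmegaStar : Type := {x : StoneCech ℕ // x ∉ Set.range stoneCechUnit}

noncomputable def Ost.homeoOm : Ost.Om ≃ₜ OmegaStar := Ost.homeoUS.subtype Ost.homeoUS_iff

/-- `C_k(ω*, ω*)`, the space of continuous self-maps of `ω*` with the compact-open topology
(the default topology on `C(ω*, ω*)` in Mathlib), is a Baire space. -/
theorem baireSpace_continuousMaps_omegaStar : BaireSpace C(OmegaStar, OmegaStar) := by
  exact Ost.baireSpace_of_homeomorph (Ost.homeoOm.arrowCongr Ost.homeoOm) Ost.baireSpace_Om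
end

section
/- The set of all f ∈ C(ω*,ω*) for which there exists an injective map φ : ℕ → ℕ such that f is the restriction to ω* of the Stone–Čech extension βφ (i.e. for every x ∈ ω*, the value of βφ at x, as an element of StoneCech ℕ, lies in ω* and equals f x) is dense in C_k(ω*,ω*). -/
/-- The Stone–Čech extension `βφ : StoneCech ℕ → StoneCech ℕ` of a map `φ : ℕ → ℕ`. -/
noncomputable def betaExtend (φ : ℕ → ℕ) : StoneCech ℕ → StoneCech ℕ :=
  stoneCechExtend (continuous_stoneCechUnit.comp continuous_of_discreteTopology (f := φ))

namespace DenseAux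

open Filter Set TopologicalSpace

/-! ### The correspondence between `StoneCech ℕ` and `Ultrafilter ℕ` -/

noncomputable def toU : StoneCech ℕ → Ultrafilter ℕ :=
  stoneCechExtend (continuous_of_discreteTopology (f := (pure : ℕ → Ultrafilter ℕ)))

lemma continuous_toU : Continuous toU := continuous_stoneCechExtend _

noncomputable def ofU : Ultrafilter ℕ → StoneCech ℕ :=
  Ultrafilter.extend stoneCechUnit

lemma continuous_ofU : Continuous ofU := continuous_ultrafilter_extend _

lemma toU_unit (n : ℕ) : toU (stoneCechUnit n) = pure n :=
  congrFun (stoneCechExtend_extends _) n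

lemma ofU_pure (n : ℕ) : ofU (pure n) = stoneCechUnit n :=
  congrFun (ultrafilter_extend_extends _) n

lemma ofU_toU (x : StoneCech ℕ) : ofU (toU x) = x := by
  have h : ofU ∘ toU = id := by
    apply stoneCech_hom_ext (continuous_ofU.comp continuous_toU) continuous_id
    funext n
    simp [Function.comp, toU_unit, ofU_pure]
  exact congrFun h x

lemma toU_ofU (u : Ultrafilter ℕ) : toU (ofU u) = u := by
  have h : toU ∘ ofU = id := by
    apply denseRange_pure.equalizer (continuous_toU.comp continuous_ofU) continuous_id
    funext n
    simp [Function.comp, toU_unit, ofU_pure]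
  exact congrFun h u

lemma continuous_umap (φ : ℕ → ℕ) :
    Continuous (Ultrafilter.map φ : Ultrafilter ℕ → Ultrafilter ℕ) := by
  refine ultrafilterBasis_is_basis.continuous_iff.mpr ?_
  rintro _ ⟨A, rfl⟩
  have h : (Ultrafilter.map φ) ⁻¹' {u | A ∈ u} = {u : Ultrafilter ℕ | φ ⁻¹' A ∈ u} := by
    ext u
    exact Ultrafilter.mem_map
  rw [h]
  exact ultrafilter_isOpen_basic _

lemma betaExtend_unit (φ : ℕ → ℕ) (n : ℕ) :
    betaExtend φ (stoneCechUnit n) = stoneCechUnit (φ n) :=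
  congrFun (stoneCechExtend_extends _) n

lemma toU_betaExtend (φ : ℕ → ℕ) (x : StoneCech ℕ) :
    toU (betaExtend φ x) = (toU x).map φ := by
  have h : toU ∘ betaExtend φ = (Ultrafilter.map φ) ∘ toU := by
    apply stoneCech_hom_ext (continuous_toU.comp (continuous_stoneCechExtend _))
      ((continuous_umap φ).comp continuous_toU)
    funext n
    show toU (betaExtend φ (stoneCechUnit n)) = Ultrafilter.map φ (toU (stoneCechUnit n))
    rw [betaExtend_unit, toU_unit, toU_unit, Ultrafilter.map_pure]
  exact congrFun h x

/-! ### Free ultrafilters -/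

lemma free_le_cofinite {u : Ultrafilter ℕ} (h : ∀ a, u ≠ pure a) :
    (u : Filter ℕ) ≤ cofinite := by
  rcases u.le_cofinite_or_eq_pure with h' | ⟨a, rfl⟩
  · exact h'
  · exact absurd rfl (h a)

lemma free_infinite {u : Ultrafilter ℕ} (h : ∀ a, u ≠ pure a) {A : Set ℕ}
    (hA : A ∈ u) : A.Infinite := by
  intro hfin
  obtain ⟨a, -, rfl⟩ := Ultrafilter.eq_pure_of_finite_mem hfin hA
  exact h a rfl

lemma map_free {u : Ultrafilter ℕ} (h : ∀ a, u ≠ pure a) {φ : ℕ → ℕ}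
    (hφ : Function.Injective φ) : ∀ a, u.map φ ≠ pure a := by
  intro a ha
  have h1 : φ ⁻¹' {a} ∈ u := by
    rw [← Ultrafilter.mem_map, ha]
    exact Ultrafilter.mem_pure.mpr rfl
  have h2 : (φ ⁻¹' {a}).Finite := by
    apply Set.Subsingleton.finite
    intro x hx y hy
    exact hφ (hx.trans hy.symm)
  exact (free_infinite h h1) h2

lemma exists_free {A : Set ℕ} (hA : A.Infinite) :
    ∃ u : Ultrafilter ℕ, (∀ a, u ≠ pure a) ∧ A ∈ u := by
  have hne : Filter.NeBot ((cofinite : Filter ℕ) ⊓ Filter.principal A) := by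
    rw [Filter.inf_principal_neBot_iff]
    intro U hU
    have : (A \ Uᶜ).Infinite := hA.diff hU
    obtain ⟨x, hx⟩ := this.nonempty
    exact ⟨x, by simpa using hx.2, hx.1⟩
  haveI := hne
  refine ⟨Ultrafilter.of ((cofinite : Filter ℕ) ⊓ Filter.principal A), ?_, ?_⟩
  · intro a ha
    have hc : ({a}ᶜ : Set ℕ) ∈ Ultrafilter.of ((cofinite : Filter ℕ) ⊓ Filter.principal A) :=
      Ultrafilter.mem_coe.mp (Ultrafilter.of_le _
        (Filter.mem_inf_of_left ((Set.finite_singleton a).compl_mem_cofinite)))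
    rw [ha] at hc
    exact (Ultrafilter.mem_pure.mp hc) rfl
  · exact Ultrafilter.mem_coe.mp (Ultrafilter.of_le _
      (Filter.mem_inf_of_right (Filter.mem_principal_self A)))

/-! ### `ω*` -/

noncomputable def m (x : OmegaStar) : Ultrafilter ℕ := toU x.1

lemma continuous_m : Continuous m := continuous_toU.comp continuous_subtype_val

lemma m_free (x : OmegaStar) : ∀ a, m x ≠ pure a := by
  intro a ha
  exact x.2 ⟨a, by rw [← ofU_pure a, ← ha]; exact (ofU_toU x.1 : ofU (m x) = x.1)⟩

lemma exists_m_eq {u : Ultrafilter ℕ} (h : ∀ a, u ≠ pure a) :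
    ∃ x : OmegaStar, m x = u := by
  refine ⟨⟨ofU u, ?_⟩, ?_⟩
  · rintro ⟨a, ha⟩
    have := congrArg toU ha
    rw [toU_ofU, toU_unit] at this
    exact h a this.symm
  · exact toU_ofU u

/-- Basic clopen subsets of `ω*`. -/
def Bs (A : Set ℕ) : Set OmegaStar := {x | A ∈ m x}

lemma isOpen_Bs (A : Set ℕ) : IsOpen (Bs A) :=
  (ultrafilter_isOpen_basic A).preimage continuous_m

/-- Between a compact set and an open superset in `ω*` one can find a basic set. -/
lemma exists_basic {K U : Set OmegaStar} (hK : IsCompact K) (hU : IsOpen U)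
    (hKU : K ⊆ U) : ∃ A : Set ℕ, K ⊆ Bs A ∧ Bs A ⊆ U := by
  obtain ⟨W, hW, hWU⟩ := isOpen_induced_iff.mp hU
  -- for each x ∈ K pick a basic set
  have hpt : ∀ x : K, ∃ A : Set ℕ, (x : OmegaStar) ∈ Bs A ∧ Bs A ⊆ U := by
    rintro ⟨x, hx⟩
    have hxW : (x : OmegaStar).1 ∈ W := by
      have := hKU hx; rw [← hWU] at this; exact this
    have hxV : m x ∈ ofU ⁻¹' W := by
      simpa [m, Set.mem_preimage, ofU_toU] using hxW
    obtain ⟨b, ⟨A, rfl⟩, hxb, hbV⟩ :=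
      ultrafilterBasis_is_basis.exists_subset_of_mem_open hxV (hW.preimage continuous_ofU)
    refine ⟨A, hxb, ?_⟩
    intro y hy
    have : m y ∈ ofU ⁻¹' W := hbV hy
    rw [← hWU]
    simpa [m, ofU_toU] using this
  choose A hA1 hA2 using hpt
  have hcov : K ⊆ ⋃ x : K, Bs (A x) := fun x hx =>
    Set.mem_iUnion.mpr ⟨⟨x, hx⟩, hA1 ⟨x, hx⟩⟩
  obtain ⟨t, ht⟩ := hK.elim_finite_subcover (fun x : K => Bs (A x))
    (fun x => isOpen_Bs (A x)) hcov
  refine ⟨⋃ i ∈ t, A i, ?_, ?_⟩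
  · intro x hx
    obtain ⟨i, hi, hxi⟩ := Set.mem_iUnion₂.mp (ht hx)
    exact (Ultrafilter.finite_biUnion_mem_iff t.finite_toSet).mpr ⟨i, hi, hxi⟩
  · intro y hy
    obtain ⟨i, _, hyi⟩ := (Ultrafilter.finite_biUnion_mem_iff t.finite_toSet).mp hy
    exact hA2 i hyi

/-! ### The recursive choice function -/

noncomputable def pick (T : ℕ → Set ℕ) (hT : ∀ k, (T k).Infinite) : ℕ → ℕ
  | k =>
    ((hT k).diff
      (((Finset.range k).attach.image (fun m => pick T hT m.1)).finite_toSet)).nonempty.some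
decreasing_by all_goals exact Finset.mem_range.mp m.2

lemma pick_spec (T : ℕ → Set ℕ) (hT : ∀ k, (T k).Infinite) (k : ℕ) :
    pick T hT k ∈ T k \
      ↑((Finset.range k).attach.image (fun m => pick T hT m.1)) := by
  rw [pick]
  exact Set.Nonempty.some_mem _

lemma pick_mem (T : ℕ → Set ℕ) (hT : ∀ k, (T k).Infinite) (k : ℕ) :
    pick T hT k ∈ T k := (pick_spec T hT k).1

lemma pick_injective (T : ℕ → Set ℕ) (hT : ∀ k, (T k).Infinite) :
    Function.Injective (pick T hT) := by
  have key : ∀ {a b : ℕ}, a < b → pick T hT a ≠ pick T hT b := by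
    intro a b hab h
    apply (pick_spec T hT b).2
    rw [← h]
    simp only [Finset.coe_image, Set.mem_image]
    exact ⟨⟨a, Finset.mem_range.mpr hab⟩, Finset.mem_coe.mpr (Finset.mem_attach _ _), rfl⟩
  intro a b h
  rcases lt_trichotomy a b with hab | hab | hab
  · exact absurd h (key hab)
  · exact hab
  · exact absurd h.symm (key hab)

end DenseAux

open Filter Set TopologicalSpace DenseAux in
/-- The set of restrictions to `ω*` of Stone–Čech extensions of injective maps `ℕ → ℕ` is
dense in `C_k(ω*, ω*)`. -/
theorem dense_injective_extensions :
    Dense {f : C(OmegaStar, OmegaStar) |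
      ∃ φ : ℕ → ℕ, Function.Injective φ ∧
        ∀ x : OmegaStar, betaExtend φ (x : StoneCech ℕ) = (f x : StoneCech ℕ)} := by
  classical
  set S := {f : C(OmegaStar, OmegaStar) |
      ∃ φ : ℕ → ℕ, Function.Injective φ ∧
        ∀ x : OmegaStar, betaExtend φ (x : StoneCech ℕ) = (f x : StoneCech ℕ)} with hS
  -- a general construction: any injective φ gives an element of S
  have hmk : ∀ φ : ℕ → ℕ, Function.Injective φ →
      ∃ g : C(OmegaStar, OmegaStar), g ∈ S ∧ ∀ x : OmegaStar, m (g x) = (m x).map φ := by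
    intro φ hφ
    have hfree : ∀ x : OmegaStar, betaExtend φ x.1 ∉ Set.range stoneCechUnit := by
      rintro x ⟨a, ha⟩
      have h1 : toU (betaExtend φ x.1) = (m x).map φ := toU_betaExtend φ x.1
      rw [← ha, toU_unit] at h1
      exact map_free (m_free x) hφ a h1.symm
    refine ⟨⟨fun x => ⟨betaExtend φ x.1, hfree x⟩, ?_⟩, ⟨φ, hφ, fun x => rfl⟩, ?_⟩
    · exact Continuous.subtype_mk ((continuous_stoneCechExtend _).comp continuous_subtype_val) _
    · intro x
      exact toU_betaExtend φ x.1
  rw [dense_iff_inter_open]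
  intro O hO hOne
  obtain ⟨f₀, hf₀⟩ := hOne
  obtain ⟨v, hvB, hfv, hvO⟩ :=
    (isTopologicalBasis_of_subbasis ContinuousMap.compactOpen_eq).exists_subset_of_mem_open hf₀ hO
  obtain ⟨F, ⟨hFfin, hFsub⟩, rfl⟩ := hvB
  haveI : Finite ↥F := hFfin.to_subtype
  -- extract compact/open data
  have hdata : ∀ s : ↥F, ∃ K U : Set OmegaStar, IsCompact K ∧ IsOpen U ∧
      (s : Set C(OmegaStar, OmegaStar)) = {f : C(OmegaStar, OmegaStar) | Set.MapsTo (⇑f) K U} := by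
    rintro ⟨s, hs⟩
    obtain ⟨K, hK, U, hU, heq⟩ := hFsub hs
    exact ⟨K, U, hK, hU, heq.symm⟩
  choose K U hK hU hsEq using hdata
  have hf₀i : ∀ i : ↥F, Set.MapsTo f₀ (K i) (U i) := by
    intro i
    have : f₀ ∈ (i : Set C(OmegaStar, OmegaStar)) := hfv (i : Set _) i.2
    rwa [hsEq i] at this
  -- choose basic sets A i with f₀ '' K i ⊆ Bs (A i) ⊆ U i
  have hA : ∀ i : ↥F, ∃ A : Set ℕ, f₀ '' (K i) ⊆ Bs A ∧ Bs A ⊆ U i := by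
    intro i
    exact exists_basic ((hK i).image f₀.continuous) (hU i) (Set.image_subset_iff.mpr (hf₀i i))
  choose A hA1 hA2 using hA
  -- choose basic sets C i with K i ⊆ Bs (C i) ⊆ f₀ ⁻¹' (Bs (A i))
  have hC : ∀ i : ↥F, ∃ C : Set ℕ, K i ⊆ Bs C ∧ Bs C ⊆ f₀ ⁻¹' (Bs (A i)) := by
    intro i
    refine exists_basic (hK i) ((isOpen_Bs (A i)).preimage f₀.continuous) ?_
    intro x hx
    exact hA1 i ⟨x, hx, rfl⟩
  choose C hC1 hC2 using hC
  -- the signature function and the atoms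
  set sig : ℕ → Set ↥F := fun k => {i | k ∈ C i} with hsig
  set E : Set ℕ := {k | ({n | sig n = sig k} : Set ℕ).Finite} with hEdef
  have hE : E.Finite := by
    have hsub : E ⊆ ⋃ s ∈ {s : Set ↥F | ({n | sig n = s} : Set ℕ).Finite}, {n | sig n = s} := by
      intro k hk
      exact Set.mem_biUnion hk rfl
    exact (Set.Finite.biUnion (Set.toFinite _) (fun s hs => hs)).subset hsub
  -- the targets
  set T : ℕ → Set ℕ := fun k =>
    if ({n | sig n = sig k} : Set ℕ).Finite then Set.univ else ⋂ i ∈ sig k, A i with hTdef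
  have hT : ∀ k, (T k).Infinite := by
    intro k
    show (if ({n | sig n = sig k} : Set ℕ).Finite then Set.univ
      else ⋂ i ∈ sig k, A i).Infinite
    split_ifs with hfin
    · exact Set.infinite_univ
    · -- the atom of k is infinite; produce a free ultrafilter on it
      obtain ⟨u, hufree, huD⟩ := exists_free (hfin)
      obtain ⟨x, hx⟩ := exists_m_eq hufree
      have hxC : ∀ i ∈ sig k, x ∈ Bs (C i) := by
        intro i hi
        have : {n | sig n = sig k} ⊆ C i := by
          intro n hn
          have : i ∈ sig n := by rw [Set.mem_setOf_eq.mp hn]; exact hi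
          exact this
        show C i ∈ m x
        rw [hx]
        exact Filter.mem_of_superset huD this
      have hfA : ∀ i ∈ sig k, A i ∈ m (f₀ x) := by
        intro i hi
        exact hC2 i (hxC i hi)
      have hmem : (⋂ i ∈ sig k, A i) ∈ m (f₀ x) :=
        (Filter.biInter_mem (Set.toFinite _)).mpr hfA
      exact free_infinite (m_free (f₀ x)) hmem
  -- the injection
  set φ : ℕ → ℕ := pick T hT with hφdef
  have hφinj : Function.Injective φ := pick_injective T hT
  obtain ⟨g, hgS, hgm⟩ := hmk φ hφinj
  refine ⟨g, hvO ?_, hgS⟩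
  -- g belongs to every subbasic set in F
  intro s hs
  lift s to ↥F using hs with i
  rw [hsEq i]
  intro x hx
  -- show g x ∈ U i
  have hxC : C i ∈ m x := hC1 i hx
  have hEc : Eᶜ ∈ m x := free_le_cofinite (m_free x) hE.compl_mem_cofinite
  have hsubset : C i \ E ⊆ φ ⁻¹' (A i) := by
    intro k hk
    have hkT : φ k ∈ T k := pick_mem T hT k
    have hne : ¬ ({n | sig n = sig k} : Set ℕ).Finite := hk.2
    rw [show T k = ⋂ i ∈ sig k, A i from if_neg hne] at hkT
    have hik : i ∈ sig k := hk.1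
    exact Set.mem_iInter₂.mp hkT i hik
  have hpre : φ ⁻¹' (A i) ∈ m x :=
    Filter.mem_of_superset (Filter.inter_mem hxC hEc) hsubset
  have hgx : A i ∈ m (g x) := by
    rw [hgm x]
    exact Ultrafilter.mem_map.mpr hpre
  exact hA2 i hgx
end

section
/- Suppose (U_n)_{n∈ℕ} is a sequence of nonempty subsets of C(ω*,ω*), each of the form ⋂_{i=0}^{k_n} [A_i^n, B_i^n] where all A_i^n, B_i^n are clopen subsets of ω*, and U_{n+1} ⊆ U_n for every n. Then there exists an injective map φ : ℕ → ℕ whose Stone–Čech extension βφ restricts to a continuous self-map of ω* that belongs to ⋂_{n∈ℕ} U_n; in particular ⋂_{n∈ℕ} U_n is nonempty. -/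
open Filter Set

noncomputable def sigmaU : StoneCech ℕ → Ultrafilter ℕ :=
  stoneCechExtend (continuous_of_discreteTopology (f := (pure : ℕ → Ultrafilter ℕ)))

noncomputable def tauU : Ultrafilter ℕ → StoneCech ℕ :=
  Ultrafilter.extend stoneCechUnit

lemma continuous_sigmaU : Continuous sigmaU := continuous_stoneCechExtend _

lemma continuous_tauU : Continuous tauU := continuous_ultrafilter_extend _

lemma sigmaU_unit (n : ℕ) : sigmaU (stoneCechUnit n) = pure n :=
  congrFun (stoneCechExtend_extends _) n

lemma tauU_pure (n : ℕ) : tauU (pure n) = stoneCechUnit n :=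
  congrFun (ultrafilter_extend_extends _) n

lemma sigmaU_tauU (u : Ultrafilter ℕ) : sigmaU (tauU u) = u := by
  have h : sigmaU ∘ tauU = id := by
    apply Continuous.ext_on denseRange_pure (continuous_sigmaU.comp continuous_tauU) continuous_id
    rintro _ ⟨n, rfl⟩
    simp [tauU_pure, sigmaU_unit]
  exact congrFun h u

lemma tauU_sigmaU (x : StoneCech ℕ) : tauU (sigmaU x) = x := by
  have h : tauU ∘ sigmaU = id := by
    apply stoneCech_hom_ext (continuous_tauU.comp continuous_sigmaU) continuous_id
    funext n
    simp [sigmaU_unit, tauU_pure]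
  exact congrFun h x

lemma mem_range_unit_iff {x : StoneCech ℕ} :
    x ∈ Set.range stoneCechUnit ↔ sigmaU x ∈ Set.range (pure : ℕ → Ultrafilter ℕ) := by
  constructor
  · rintro ⟨n, rfl⟩; exact ⟨n, (sigmaU_unit n).symm⟩
  · rintro ⟨n, hn⟩; exact ⟨n, by rw [← tauU_sigmaU x, ← hn, tauU_pure]⟩

lemma infinite_of_mem_sigmaU {x : StoneCech ℕ} (hx : x ∉ Set.range stoneCechUnit)
    {s : Set ℕ} (hs : s ∈ sigmaU x) : s.Infinite := by
  by_contra h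
  rw [Set.not_infinite] at h
  obtain ⟨a, -, ha⟩ := Ultrafilter.eq_pure_of_finite_mem h hs
  exact hx (mem_range_unit_iff.mpr ⟨a, ha.symm⟩)

lemma isOpen_range_pure : IsOpen (Set.range (pure : ℕ → Ultrafilter ℕ)) := by
  have : Set.range (pure : ℕ → Ultrafilter ℕ) = ⋃ n : ℕ, {u : Ultrafilter ℕ | {n} ∈ u} := by
    ext u
    simp only [Set.mem_range, Set.mem_iUnion, Set.mem_setOf_eq]
    constructor
    · rintro ⟨n, rfl⟩; exact ⟨n, singleton_mem_pure⟩
    · rintro ⟨n, hn⟩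
      obtain ⟨a, ha, h⟩ := Ultrafilter.eq_pure_of_finite_mem (Set.finite_singleton n) hn
      exact ⟨a, h.symm⟩
  rw [this]
  exact isOpen_iUnion fun n => ultrafilter_isOpen_basic _

lemma isClosed_omegaStarSet : IsClosed {x : StoneCech ℕ | x ∉ Set.range stoneCechUnit} := by
  rw [show {x : StoneCech ℕ | x ∉ Set.range stoneCechUnit}
      = (sigmaU ⁻¹' Set.range (pure : ℕ → Ultrafilter ℕ))ᶜ by
    ext x; simp only [Set.mem_setOf_eq, Set.mem_compl_iff, Set.mem_preimage]
    rw [← mem_range_unit_iff]]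
  exact (isOpen_range_pure.preimage continuous_sigmaU).isClosed_compl

instance : CompactSpace OmegaStar :=
  isCompact_iff_compactSpace.mp isClosed_omegaStarSet.isCompact

/-- separate a compact set from a point by a basic clopen set -/
lemma sep_point {K : Set (Ultrafilter ℕ)} (hK : IsCompact K) (v : Ultrafilter ℕ)
    (hv : ∀ u ∈ K, u ≠ v) : ∃ M : Set ℕ, (∀ u ∈ K, M ∈ u) ∧ M ∉ v := by
  classical
  have h1 : ∀ i : K, ∃ s : Set ℕ, s ∈ (i : Ultrafilter ℕ) ∧ s ∉ v := by
    rintro ⟨u, hu⟩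
    by_contra h
    push_neg at h
    exact hv u hu (Ultrafilter.coe_le_coe.mp fun s hs => h s hs).symm
  choose s hs1 hs2 using h1
  have hcov : K ⊆ ⋃ i : K, {w : Ultrafilter ℕ | s i ∈ w} := fun u hu =>
    Set.mem_iUnion.mpr ⟨⟨u, hu⟩, hs1 ⟨u, hu⟩⟩
  obtain ⟨t, ht⟩ := hK.elim_finite_subcover _ (fun i : K => ultrafilter_isOpen_basic (s i)) hcov
  refine ⟨⋃ i ∈ t, s i, ?_, ?_⟩
  · intro u hu
    obtain ⟨i, hit, hiu⟩ := Set.mem_iUnion₂.mp (ht hu)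
    exact Filter.mem_of_superset hiu (Set.subset_biUnion_of_mem hit)
  · intro hMv
    have hc : (⋃ i ∈ t, s i)ᶜ ∈ v := by
      rw [Set.compl_iUnion₂]
      exact (Filter.biInter_finset_mem t).mpr fun i _ =>
        Ultrafilter.compl_mem_iff_notMem.mpr (hs2 i)
    exact Ultrafilter.compl_mem_iff_notMem.mp hc hMv

lemma sep_compacts {K L : Set (Ultrafilter ℕ)} (hK : IsCompact K) (hL : IsCompact L)
    (hd : ∀ u ∈ K, ∀ v ∈ L, u ≠ v) :
    ∃ M : Set ℕ, (∀ u ∈ K, M ∈ u) ∧ ∀ v ∈ L, M ∉ v := by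
  classical
  have h1 : ∀ i : L, ∃ M : Set ℕ, (∀ u ∈ K, M ∈ u) ∧ M ∉ (i : Ultrafilter ℕ) := fun ⟨v, hv⟩ =>
    sep_point hK v fun u hu => hd u hu v hv
  choose g hg1 hg2 using h1
  have hcov : L ⊆ ⋃ i : L, {w : Ultrafilter ℕ | (g i)ᶜ ∈ w} := fun v hv =>
    Set.mem_iUnion.mpr ⟨⟨v, hv⟩, Ultrafilter.compl_mem_iff_notMem.mpr (hg2 ⟨v, hv⟩)⟩
  obtain ⟨t, ht⟩ := hL.elim_finite_subcover _
    (fun i : L => ultrafilter_isOpen_basic ((g i)ᶜ)) hcov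
  refine ⟨⋂ i ∈ t, g i, ?_, ?_⟩
  · intro u hu
    exact (Filter.biInter_finset_mem t).mpr fun i _ => hg1 i u hu
  · intro v hv hMv
    obtain ⟨i, hit, hiv⟩ := Set.mem_iUnion₂.mp (ht hv)
    have : g i ∈ v := Filter.mem_of_superset hMv (Set.biInter_subset_of_mem hit)
    exact Ultrafilter.compl_mem_iff_notMem.mp hiv this

/-- the "star" of a subset of ℕ inside `ω*` -/
def starSet (M : Set ℕ) : Set OmegaStar := {x | M ∈ sigmaU x.1}

lemma isClopen_eq_starSet {C : Set OmegaStar} (hC : IsClopen C) : ∃ M, C = starSet M := by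
  classical
  set ι : OmegaStar → Ultrafilter ℕ := fun x => sigmaU x.1 with hι
  have hιc : Continuous ι := continuous_sigmaU.comp continuous_subtype_val
  have hιinj : Function.Injective ι := by
    intro x y hxy
    apply Subtype.ext
    rw [← tauU_sigmaU x.1, ← tauU_sigmaU y.1]
    exact congrArg tauU hxy
  have hK : IsCompact (ι '' C) := (hC.1.isCompact).image hιc
  have hL : IsCompact (ι '' Cᶜ) := (hC.2.isClosed_compl.isCompact).image hιc
  have hd : ∀ u ∈ ι '' C, ∀ v ∈ ι '' Cᶜ, u ≠ v := by
    rintro _ ⟨x, hx, rfl⟩ _ ⟨y, hy, rfl⟩ h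
    exact hy (by rwa [hιinj h] at hx)
  obtain ⟨M, hM1, hM2⟩ := sep_compacts hK hL hd
  refine ⟨M, ?_⟩
  ext x
  constructor
  · intro hx
    exact hM1 (ι x) ⟨x, hx, rfl⟩
  · intro hx
    by_contra hxC
    exact hM2 (ι x) ⟨x, hxC, rfl⟩ hx

lemma continuous_ultrafilter_map (φ : ℕ → ℕ) : Continuous (Ultrafilter.map φ) := by
  apply ultrafilterBasis_is_basis.continuous_iff.mpr
  rintro _ ⟨s, rfl⟩
  exact ultrafilter_isOpen_basic (φ ⁻¹' s)

lemma continuous_betaExtend (φ : ℕ → ℕ) : Continuous (betaExtend φ) :=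
  continuous_stoneCechExtend _

lemma betaExtend_unit (φ : ℕ → ℕ) (n : ℕ) :
    betaExtend φ (stoneCechUnit n) = stoneCechUnit (φ n) :=
  congrFun (stoneCechExtend_extends _) n

lemma sigmaU_betaExtend (φ : ℕ → ℕ) (x : StoneCech ℕ) :
    sigmaU (betaExtend φ x) = Ultrafilter.map φ (sigmaU x) := by
  have h : sigmaU ∘ betaExtend φ = Ultrafilter.map φ ∘ sigmaU := by
    apply stoneCech_hom_ext (continuous_sigmaU.comp (continuous_betaExtend φ))
      ((continuous_ultrafilter_map φ).comp continuous_sigmaU)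
    funext n
    simp [betaExtend_unit, sigmaU_unit, Ultrafilter.map_pure]
  exact congrFun h x

lemma betaExtend_notMem_range {φ : ℕ → ℕ} (hφ : Function.Injective φ)
    {x : StoneCech ℕ} (hx : x ∉ Set.range stoneCechUnit) :
    betaExtend φ x ∉ Set.range stoneCechUnit := by
  rintro ⟨n, hn⟩
  have h1 : sigmaU (betaExtend φ x) = pure n := by rw [← hn, sigmaU_unit]
  rw [sigmaU_betaExtend] at h1
  have h2 : φ ⁻¹' {n} ∈ sigmaU x := by
    rw [← Ultrafilter.mem_map, h1]
    exact singleton_mem_pure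
  have h3 : (φ ⁻¹' {n}).Subsingleton := fun a ha b hb => hφ (ha.trans hb.symm)
  exact absurd (infinite_of_mem_sigmaU hx h2) h3.finite.not_infinite

open Classical in
lemma greedy_exists (A B : ℕ → Set ℕ)
    (hcons : ∀ T : Finset ℕ, (⋂ t ∈ T, A t).Infinite → (⋂ t ∈ T, B t).Infinite) :
    ∃ φ : ℕ → ℕ, Function.Injective φ ∧ ∀ t, {a | a ∈ A t ∧ φ a ∉ B t}.Finite := by
  classical
  -- greedy selection of constraint indices for each k
  let g : ℕ → ℕ → Finset ℕ := fun k => Nat.rec ∅ fun j s =>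
    if k ∈ A j ∧ (⋂ i ∈ insert j s, A i).Infinite then insert j s else s
  have gsucc : ∀ k j, g k (j + 1) =
      if k ∈ A j ∧ (⋂ i ∈ insert j (g k j), A i).Infinite then insert j (g k j) else g k j :=
    fun _ _ => rfl
  have gsub : ∀ k j, g k j ⊆ Finset.range j := by
    intro k j
    induction j with
    | zero => exact Finset.Subset.refl _
    | succ j ih =>
      rw [gsucc]
      split_ifs with h
      · intro i hi
        rcases Finset.mem_insert.mp hi with rfl | hi
        · exact Finset.mem_range.mpr (Nat.lt_succ_self _)
        · exact Finset.mem_range.mpr (Nat.lt_succ_of_lt (Finset.mem_range.mp (ih hi)))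
      · exact ih.trans (Finset.range_subset_range.mpr (Nat.le_succ _))
  have ginf : ∀ k j, (⋂ i ∈ g k j, A i).Infinite := by
    intro k j
    induction j with
    | zero =>
      have : (⋂ i ∈ (∅ : Finset ℕ), A i) = Set.univ := by simp
      show (⋂ i ∈ (∅ : Finset ℕ), A i).Infinite
      rw [this]; exact Set.infinite_univ
    | succ j ih =>
      rw [gsucc]
      split_ifs with h
      · exact h.2
      · exact ih
  have gmono : ∀ k j j', j ≤ j' → g k j ⊆ g k j' := by
    intro k j j' hjj'
    induction j', hjj' using Nat.le_induction with
    | base => exact Finset.Subset.refl _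
    | succ m hm ih =>
      rw [gsucc]
      split_ifs with h
      · exact ih.trans (Finset.subset_insert _ _)
      · exact ih
  have gmemA : ∀ k j i, i ∈ g k j → k ∈ A i := by
    intro k j
    induction j with
    | zero => intro i hi; exact absurd hi (Finset.notMem_empty i)
    | succ j ih =>
      intro i hi
      rw [gsucc] at hi
      split_ifs at hi with h
      · rcases Finset.mem_insert.mp hi with rfl | hi
        · exact h.1
        · exact ih i hi
      · exact ih i hi
  set S : ℕ → Finset ℕ := fun k => g k (k + 1) with hS
  have hSB : ∀ k, (⋂ i ∈ S k, B i).Infinite := fun k => hcons _ (ginf k (k + 1))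
  have hstep : ∀ k (t : Finset ℕ), ∃ a, a ∈ (⋂ i ∈ S k, B i) ∧ a ∉ t := by
    intro k t
    obtain ⟨a, h1, h2⟩ := (hSB k).exists_notMem_finset t
    exact ⟨a, h1, h2⟩
  -- define φ by recursion, remembering used values
  let q : ℕ → ℕ × Finset ℕ := Nat.rec
    ((hstep 0 ∅).choose, {(hstep 0 ∅).choose})
    (fun k p => ((hstep (k + 1) p.2).choose, insert (hstep (k + 1) p.2).choose p.2))
  set φ : ℕ → ℕ := fun k => (q k).1 with hφ
  have hmemB : ∀ k, φ k ∈ ⋂ i ∈ S k, B i := by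
    intro k
    cases k with
    | zero => exact (hstep 0 ∅).choose_spec.1
    | succ k => exact (hstep (k + 1) (q k).2).choose_spec.1
  have hnotprev : ∀ k, φ (k + 1) ∉ (q k).2 := fun k => (hstep (k + 1) (q k).2).choose_spec.2
  have hqsucc : ∀ k, (q (k + 1)).2 = insert (φ (k + 1)) (q k).2 := fun _ => rfl
  have hself : ∀ k, φ k ∈ (q k).2 := by
    intro k
    cases k with
    | zero => exact Finset.mem_singleton_self _
    | succ k => exact Finset.mem_insert_self _ _
  have humono : ∀ k m, k ≤ m → (q k).2 ⊆ (q m).2 := by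
    intro k m hkm
    induction m, hkm using Nat.le_induction with
    | base => exact Finset.Subset.refl _
    | succ m hm ih =>
      rw [hqsucc]
      exact ih.trans (Finset.subset_insert _ _)
  have key : ∀ a b, a < b → φ a ≠ φ b := by
    intro a b hab heq
    cases b with
    | zero => exact absurd hab (Nat.not_lt_zero a)
    | succ c =>
      have h1 : φ a ∈ (q c).2 := humono a c (Nat.lt_succ_iff.mp hab) (hself a)
      rw [heq] at h1
      exact hnotprev c h1
  have hinj : Function.Injective φ := by
    intro a b hab
    rcases lt_trichotomy a b with h | h | h
    · exact absurd hab (key a b h)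
    · exact h
    · exact absurd hab.symm (key b a h)
  refine ⟨φ, hinj, ?_⟩
  intro t
  -- if t ≤ k, k ∈ A t, and the relevant intersection is infinite, then t gets selected
  have hin : ∀ k, t ≤ k → k ∈ A t → (⋂ i ∈ insert t (g k t), A i).Infinite → t ∈ S k := by
    intro k htk hkA hInf
    have h1 : t ∈ g k (t + 1) := by
      rw [gsucc, if_pos ⟨hkA, hInf⟩]
      exact Finset.mem_insert_self _ _
    exact gmono k (t + 1) (k + 1) (Nat.succ_le_succ htk) h1
  have hcover : {a | a ∈ A t ∧ φ a ∉ B t} ⊆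
      ↑(Finset.range (t + 1)) ∪
        ⋃ s ∈ (Finset.range t).powerset.filter
            (fun s => ¬(⋂ i ∈ insert t s, A i).Infinite),
          (⋂ i ∈ insert t s, A i) := by
    rintro k ⟨hkA, hkB⟩
    by_cases hk : k ≤ t
    · exact Or.inl (Finset.mem_coe.mpr (Finset.mem_range.mpr (Nat.lt_succ_of_le hk)))
    · push_neg at hk
      have htk : t ≤ k := le_of_lt hk
      have htS : t ∉ S k := by
        intro hmem
        exact hkB (Set.mem_iInter₂.mp (hmemB k) t hmem)
      have hfin : ¬(⋂ i ∈ insert t (g k t), A i).Infinite := by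
        intro hInf
        exact htS (hin k htk hkA hInf)
      refine Or.inr (Set.mem_iUnion₂.mpr ⟨g k t, ?_, ?_⟩)
      · exact Finset.mem_filter.mpr ⟨Finset.mem_powerset.mpr (gsub k t), hfin⟩
      · refine Set.mem_iInter₂.mpr fun i hi => ?_
        rcases Finset.mem_insert.mp hi with rfl | hi
        · exact hkA
        · exact gmemA k t i hi
  refine Set.Finite.subset (Set.Finite.union (Finset.finite_toSet _) ?_) hcover
  refine Set.Finite.biUnion (Finset.finite_toSet _) ?_
  intro s hs
  exact Set.not_infinite.mp (Finset.mem_filter.mp hs).2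

/-- If `(U n)` is a decreasing sequence of nonempty subsets of `C(ω*, ω*)`, each a finite
intersection of sets `[A, B] = {f | f '' A ⊆ B}` with `A`, `B` clopen in `ω*`, then there is an
injective `φ : ℕ → ℕ` whose Stone–Čech extension restricts to a continuous self-map of `ω*`
lying in `⋂ n, U n`; in particular `⋂ n, U n` is nonempty. -/
theorem nested_basic_sets_inter_nonempty
    (U : ℕ → Set C(OmegaStar, OmegaStar))
    (hne : ∀ n, (U n).Nonempty)
    (hform : ∀ n, ∃ (k : ℕ) (A B : Fin (k + 1) → Set OmegaStar),
      (∀ i, IsClopen (A i)) ∧ (∀ i, IsClopen (B i)) ∧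
      U n = ⋂ i, {f : C(OmegaStar, OmegaStar) | (f : OmegaStar → OmegaStar) '' A i ⊆ B i})
    (hnested : ∀ n, U (n + 1) ⊆ U n) :
    (∃ (φ : ℕ → ℕ), Function.Injective φ ∧
      ∃ f : C(OmegaStar, OmegaStar),
        (∀ x : OmegaStar, betaExtend φ (x : StoneCech ℕ) = (f x : StoneCech ℕ)) ∧
        f ∈ ⋂ n, U n) ∧
    (⋂ n, U n).Nonempty := by
  classical
  choose k 𝒜 ℬ h𝒜 hℬ hU using hform
  choose M hM using fun n (i : Fin (k n + 1)) => isClopen_eq_starSet (h𝒜 n i)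
  choose N hN using fun n (i : Fin (k n + 1)) => isClopen_eq_starSet (hℬ n i)
  have hmem : ∀ n (f : C(OmegaStar, OmegaStar)),
      f ∈ U n ↔ ∀ i, (f : OmegaStar → OmegaStar) '' starSet (M n i) ⊆ starSet (N n i) := by
    intro n f
    rw [hU n, Set.mem_iInter]
    exact forall_congr' fun i => by rw [Set.mem_setOf_eq, hM n i, hN n i]
  have hanti : ∀ m n, m ≤ n → U n ⊆ U m := fun m n h => antitone_nat_of_succ_le hnested h
  -- flatten the constraints
  let toFin : (n : ℕ) → ℕ → Fin (k n + 1) := fun n j =>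
    ⟨min j (k n), Nat.lt_succ_of_le (min_le_right _ _)⟩
  let AA : ℕ → Set ℕ := fun t => M (Nat.unpair t).1 (toFin _ (Nat.unpair t).2)
  let BB : ℕ → Set ℕ := fun t => N (Nat.unpair t).1 (toFin _ (Nat.unpair t).2)
  have htFin : ∀ n (i : Fin (k n + 1)), toFin n i.1 = i := fun n i =>
    Fin.ext (min_eq_left (Nat.lt_succ_iff.mp i.isLt))
  have hAA : ∀ n (i : Fin (k n + 1)), AA (Nat.pair n i.1) = M n i := by
    intro n i
    show M (Nat.unpair (Nat.pair n i.1)).1 (toFin _ (Nat.unpair (Nat.pair n i.1)).2) = M n i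
    rw [Nat.unpair_pair, htFin]
  have hBB : ∀ n (i : Fin (k n + 1)), BB (Nat.pair n i.1) = N n i := by
    intro n i
    show N (Nat.unpair (Nat.pair n i.1)).1 (toFin _ (Nat.unpair (Nat.pair n i.1)).2) = N n i
    rw [Nat.unpair_pair, htFin]
  -- consistency of the flattened constraints
  have hcons : ∀ T : Finset ℕ, (⋂ t ∈ T, AA t).Infinite → (⋂ t ∈ T, BB t).Infinite := by
    intro T hT
    obtain ⟨f, hf⟩ := hne (T.sup fun t => (Nat.unpair t).1)
    have hfm : ∀ t ∈ T, (f : OmegaStar → OmegaStar) '' starSet (AA t) ⊆ starSet (BB t) := by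
      intro t ht
      exact (hmem (Nat.unpair t).1 f).mp
        (hanti _ _ (Finset.le_sup (f := fun t => (Nat.unpair t).1) ht) hf)
        (toFin _ (Nat.unpair t).2)
    set I := ⋂ t ∈ T, AA t with hI
    have hne' : (Filter.cofinite ⊓ Filter.principal I).NeBot := hT.cofinite_inf_principal_neBot
    set u := Ultrafilter.of (Filter.cofinite ⊓ Filter.principal I) with hu
    have hule : (u : Filter ℕ) ≤ Filter.cofinite ⊓ Filter.principal I := Ultrafilter.of_le _
    have hIu : I ∈ u := Filter.le_principal_iff.mp (hule.trans inf_le_right)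
    have hucof : (u : Filter ℕ) ≤ Filter.cofinite := hule.trans inf_le_left
    have hxfree : tauU u ∉ Set.range stoneCechUnit := by
      rintro ⟨n, hn⟩
      have h1 : (u : Ultrafilter ℕ) = pure n := by rw [← sigmaU_tauU u, ← hn, sigmaU_unit]
      have h2 : ({n} : Set ℕ)ᶜ ∈ u := hucof (by simp [Filter.mem_cofinite])
      rw [h1] at h2
      exact (Ultrafilter.compl_mem_iff_notMem.mp h2) singleton_mem_pure
    set x : OmegaStar := ⟨tauU u, hxfree⟩ with hx
    have hσx : sigmaU x.1 = u := sigmaU_tauU u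
    have hxA : ∀ t ∈ T, x ∈ starSet (AA t) := by
      intro t ht
      show AA t ∈ sigmaU x.1
      rw [hσx]
      exact Filter.mem_of_superset hIu (Set.biInter_subset_of_mem ht)
    have hfx : ∀ t ∈ T, BB t ∈ sigmaU (f x).1 := fun t ht => hfm t ht ⟨x, hxA t ht, rfl⟩
    have hmemI : (⋂ t ∈ T, BB t) ∈ (sigmaU (f x).1 : Filter ℕ) :=
      (Filter.biInter_finset_mem T).mpr hfx
    exact infinite_of_mem_sigmaU (f x).2 hmemI
  obtain ⟨φ, hφinj, hφbad⟩ := greedy_exists AA BB hcons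
  have hpres : ∀ x : OmegaStar, betaExtend φ x.1 ∉ Set.range stoneCechUnit := fun x =>
    betaExtend_notMem_range hφinj x.2
  let f₀ : C(OmegaStar, OmegaStar) :=
    ⟨fun x => ⟨betaExtend φ x.1, hpres x⟩,
      Continuous.subtype_mk ((continuous_betaExtend φ).comp continuous_subtype_val) _⟩
  have hf₀ : ∀ n, f₀ ∈ U n := by
    intro n
    rw [hmem]
    rintro i _ ⟨x, hx, rfl⟩
    show N n i ∈ sigmaU (betaExtend φ x.1)
    rw [sigmaU_betaExtend, Ultrafilter.mem_map]
    have hbad : {a | a ∈ M n i ∧ φ a ∉ N n i}.Finite := by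
      have := hφbad (Nat.pair n i.1)
      rwa [hAA, hBB] at this
    have hbadc : {a | a ∈ M n i ∧ φ a ∉ N n i}ᶜ ∈ sigmaU x.1 := by
      rw [Ultrafilter.compl_mem_iff_notMem]
      intro hmem'
      exact absurd (infinite_of_mem_sigmaU x.2 hmem') hbad.not_infinite
    have hMx : M n i ∈ sigmaU x.1 := hx
    refine Filter.mem_of_superset (Filter.inter_mem hMx hbadc) ?_
    rintro a ⟨haM, hab⟩
    by_contra hNa
    exact hab ⟨haM, hNa⟩
  have hf₀' : f₀ ∈ ⋂ n, U n := Set.mem_iInter.mpr hf₀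
  exact ⟨⟨φ, hφinj, f₀, fun x => rfl, hf₀'⟩, ⟨f₀, hf₀'⟩⟩
end

section
/- Let X be a locally compact Hausdorff totally disconnected (equivalently, zero-dimensional) space. Then for every open set G ⊆ C_k(X,X) and every f ∈ G, there exist n ∈ ℕ and compact clopen subsets A_0, …, A_n, B_0, …, B_n of X such that A_0, …, A_n are pairwise disjoint and f ∈ ⋂_{i=0}^{n} [A_i, B_i] ⊆ G. -/
open Set TopologicalSpace
/-- point version: compact clopen neighborhoods form a basis. -/
lemma exists_isCompact_isClopen_mem_subset {X : Type*} [TopologicalSpace X]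
    [LocallyCompactSpace X] [T2Space X] [TotallyDisconnectedSpace X]
    {x : X} {U : Set X} (hU : IsOpen U) (hx : x ∈ U) :
    ∃ V : Set X, IsCompact V ∧ IsClopen V ∧ x ∈ V ∧ V ⊆ U := by
  obtain ⟨s, hs, hxs, hsU⟩ := exists_compact_subset hU hx
  obtain ⟨W, hW, hxW, hWs⟩ :=
    loc_compact_Haus_tot_disc_of_zero_dim.mem_nhds_iff.1 (isOpen_interior.mem_nhds hxs)
  exact ⟨W, hs.of_isClosed_subset hW.1 (hWs.trans interior_subset),
    hW, hxW, (hWs.trans interior_subset).trans hsU⟩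

/-- compact version -/
lemma exists_isCompact_isClopen_subset_subset {X : Type*} [TopologicalSpace X]
    [LocallyCompactSpace X] [T2Space X] [TotallyDisconnectedSpace X]
    {K U : Set X} (hK : IsCompact K) (hU : IsOpen U)
    (hKU : K ⊆ U) : ∃ V : Set X, IsCompact V ∧ IsClopen V ∧ K ⊆ V ∧ V ⊆ U := by
  choose! V hVc hVcl hxV hVU using fun x (hx : x ∈ K) =>
    exists_isCompact_isClopen_mem_subset hU (hKU hx)
  obtain ⟨t, hts, htfin, hcover⟩ := hK.elim_finite_subcover_image
    (fun x hx => (hVcl x hx).2) (fun x hx => Set.mem_biUnion hx (hxV x hx))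
  refine ⟨⋃ x ∈ t, V x, ?_, ?_, hcover, ?_⟩
  · exact htfin.isCompact_biUnion fun x hx => hVc x (hts hx)
  · exact htfin.isClopen_biUnion fun x hx => hVcl x (hts hx)
  · exact iUnion₂_subset fun x hx => hVU x (hts hx)



/-- For a locally compact Hausdorff zero-dimensional (totally disconnected) space `X`, the sets
`⋂ i, [Aᵢ, Bᵢ]` with `Aᵢ, Bᵢ` compact clopen and the `Aᵢ` pairwise disjoint form a basis of the
compact-open topology on `C(X, X)`. -/
theorem compactOpen_basis_pairwise_disjoint
    (X : Type*) [TopologicalSpace X] [LocallyCompactSpace X] [T2Space X]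
    [TotallyDisconnectedSpace X]
    (G : Set C(X, X)) (hG : IsOpen G) (f : C(X, X)) (hf : f ∈ G) :
    ∃ (n : ℕ) (A B : Fin (n + 1) → Set X),
      (∀ i, IsCompact (A i) ∧ IsClopen (A i)) ∧
      (∀ i, IsCompact (B i) ∧ IsClopen (B i)) ∧
      Pairwise (Function.onFun Disjoint A) ∧
      f ∈ ⋂ i, {g : C(X, X) | (g : X → X) '' A i ⊆ B i} ∧
      (⋂ i, {g : C(X, X) | (g : X → X) '' A i ⊆ B i}) ⊆ G := by
  classical
  obtain ⟨-, ⟨t, ⟨htf, hts⟩, rfl⟩, hft, htG⟩ :=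
    (isTopologicalBasis_of_subbasis
      (ContinuousMap.compactOpen_eq (X := X) (Y := X))).exists_subset_of_mem_open hf hG
  haveI : Fintype t := htf.fintype
  set m := Fintype.card t with hm
  let e : Fin m ≃ t := (Fintype.equivFin t).symm
  have h2 : ∀ i : Fin m, ∃ K, IsCompact K ∧ ∃ U, IsOpen U ∧
      {g : C(X, X) | Set.MapsTo g K U} = (e i : Set C(X, X)) := by
    intro i
    rcases hts (e i).2 with ⟨K, hK, U, hU, hEq⟩
    exact ⟨K, hK, U, hU, hEq⟩
  choose K hK U hU hEq using h2
  have hmem : ∀ i, Set.MapsTo f (K i) (U i) := by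
    intro i
    have := hft _ (e i).2
    rw [← hEq i] at this
    exact this
  -- shrink to compact clopen pairs
  choose V hVcpt hVcl hfKV hVU using fun i =>
    exists_isCompact_isClopen_subset_subset ((hK i).image f.continuous) (hU i)
      ((hmem i).image_subset)
  choose A hAcpt hAcl hKA hAV using fun i =>
    exists_isCompact_isClopen_subset_subset (hK i) ((hVcl i).2.preimage f.continuous)
      (fun x hx => (hfKV i) (Set.mem_image_of_mem f hx))
  -- disjointify
  set A' : Finset (Fin m) → Set X :=
    fun S => if S.Nonempty then (⋂ j ∈ S, A j) ∩ (⋂ j ∈ Sᶜ, (A j)ᶜ) else ∅ with hA'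
  set B' : Finset (Fin m) → Set X :=
    fun S => if S.Nonempty then ⋂ j ∈ S, V j else ∅ with hB'
  have hA'sub : ∀ S : Finset (Fin m), ∀ j ∈ S, A' S ⊆ A j := by
    intro S j hj
    have hS : S.Nonempty := ⟨j, hj⟩
    simp only [hA', if_pos hS]
    exact (Set.inter_subset_left).trans (Set.biInter_subset_of_mem hj)
  have hA'subc : ∀ S : Finset (Fin m), ∀ j ∉ S, A' S ⊆ (A j)ᶜ := by
    intro S j hj
    by_cases hS : S.Nonempty
    · simp only [hA', if_pos hS]
      exact (Set.inter_subset_right).trans (Set.biInter_subset_of_mem (Finset.mem_compl.2 hj))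
    · simp only [hA', if_neg hS]; exact Set.empty_subset _
  have hA'c : ∀ S, IsCompact (A' S) ∧ IsClopen (A' S) := by
    intro S
    by_cases hS : S.Nonempty
    · have hclopen : IsClopen (A' S) := by
        simp only [hA', if_pos hS]
        exact (isClopen_biInter_finset fun j _ => hAcl j).inter
          (isClopen_biInter_finset fun j _ => (hAcl j).compl)
      obtain ⟨j₀, hj₀⟩ := hS
      exact ⟨(hAcpt j₀).of_isClosed_subset hclopen.1 (hA'sub S j₀ hj₀), hclopen⟩
    · simp only [hA', if_neg hS]
      exact ⟨isCompact_empty, isClopen_empty⟩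
  have hB'c : ∀ S, IsCompact (B' S) ∧ IsClopen (B' S) := by
    intro S
    by_cases hS : S.Nonempty
    · have hclopen : IsClopen (B' S) := by
        simp only [hB', if_pos hS]
        exact isClopen_biInter_finset fun j _ => (hVcl j)
      obtain ⟨j₀, hj₀⟩ := hS
      have hsub : B' S ⊆ V j₀ := by
        have hS' : S.Nonempty := ⟨j₀, hj₀⟩
        simp only [hB', if_pos hS']
        exact Set.biInter_subset_of_mem hj₀
      exact ⟨(hVcpt j₀).of_isClosed_subset hclopen.1 hsub, hclopen⟩
    · simp only [hB', if_neg hS]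
      exact ⟨isCompact_empty, isClopen_empty⟩
  have key : ∀ S T : Finset (Fin m), ∀ j, j ∈ S → j ∉ T → Disjoint (A' S) (A' T) := by
    intro S T j hjS hjT
    exact Set.disjoint_left.2 fun x hxS hxT => (hA'subc T j hjT hxT) (hA'sub S j hjS hxS)
  have hdisj : ∀ S T : Finset (Fin m), S ≠ T → Disjoint (A' S) (A' T) := by
    intro S T hST
    by_cases h : S ⊆ T
    · obtain ⟨j, hjT, hjS⟩ := Finset.exists_of_ssubset (Finset.ssubset_iff_subset_ne.2 ⟨h, hST⟩)
      exact (key T S j hjT hjS).symm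
    · obtain ⟨j, hjS, hjT⟩ := Finset.not_subset.1 h
      exact key S T j hjS hjT
  have hfmem : ∀ S : Finset (Fin m), f '' A' S ⊆ B' S := by
    intro S
    by_cases hS : S.Nonempty
    · rintro - ⟨x, hx, rfl⟩
      simp only [hB', if_pos hS, Set.mem_iInter]
      intro j hj
      exact hAV j (hA'sub S j hj hx)
    · simp only [hA', if_neg hS, Set.image_empty]
      exact Set.empty_subset _
  have hsubG : (⋂ S : Finset (Fin m), {g : C(X, X) | (g : X → X) '' A' S ⊆ B' S}) ⊆ G := by
    intro g hg
    apply htG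
    intro s hs
    -- s = e (e.symm ⟨s, hs⟩)
    have hse : ((e (e.symm ⟨s, hs⟩)) : Set C(X, X)) = s := by simp
    rw [← hse, ← hEq (e.symm ⟨s, hs⟩)]
    set i := e.symm ⟨s, hs⟩
    -- show MapsTo g (K i) (U i)
    intro x hx
    set S : Finset (Fin m) := Finset.univ.filter (fun j => x ∈ A j) with hSdef
    have hiS : i ∈ S := Finset.mem_filter.2 ⟨Finset.mem_univ _, hKA i hx⟩
    have hSne : S.Nonempty := ⟨i, hiS⟩
    have hxA' : x ∈ A' S := by
      simp only [hA', if_pos hSne, Set.mem_inter_iff, Set.mem_iInter]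
      constructor
      · intro j hj
        exact (Finset.mem_filter.1 hj).2
      · intro j hj
        exact fun hxj => (Finset.mem_compl.1 hj) (Finset.mem_filter.2 ⟨Finset.mem_univ _, hxj⟩)
    have hgx : g x ∈ B' S := (Set.mem_iInter.1 hg S) (Set.mem_image_of_mem g hxA')
    have : g x ∈ V i := by
      simp only [hB', if_pos hSne, Set.mem_iInter] at hgx
      exact hgx i hiS
    exact hVU i this
  -- reindex by Fin (2^m - 1 + 1)
  refine ⟨2 ^ m - 1, ?_⟩
  have hcard : Fintype.card (Finset (Fin m)) = 2 ^ m - 1 + 1 := by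
    simp [Nat.sub_add_cancel (Nat.one_le_two_pow)]
  let e2 : Fin (2 ^ m - 1 + 1) ≃ Finset (Fin m) := (Fintype.equivFinOfCardEq hcard).symm
  refine ⟨A' ∘ e2, B' ∘ e2, fun i => hA'c (e2 i), fun i => hB'c (e2 i),
    fun i j hij => hdisj _ _ (e2.injective.ne hij), ?_, ?_⟩
  · exact Set.mem_iInter.2 fun i => hfmem (e2 i)
  · intro g hg
    apply hsubG
    refine Set.mem_iInter.2 fun S => ?_
    have := Set.mem_iInter.1 hg (e2.symm S)
    simpa using this
end

section
/- Let X be an infinite compact Hausdorff totally disconnected (equivalently, zero-dimensional) space. Then C_k(X,X) is not pseudocompact: there exists a continuous real-valued function F : C_k(X,X) → ℝ that is unbounded, i.e. there is no M with |F f| ≤ M for all f ∈ C(X,X). -/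
open Set

/-- For an infinite compact Hausdorff zero-dimensional (totally disconnected) space `X`, the
space `C_k(X, X)` is not pseudocompact: there is an unbounded continuous real-valued function
on `C_k(X, X)`. -/
theorem continuousMaps_not_pseudocompact
    (X : Type*) [TopologicalSpace X] [CompactSpace X] [T2Space X]
    [TotallyDisconnectedSpace X] [Infinite X] :
    ∃ F : C(X, X) → ℝ, Continuous F ∧ ¬∃ M : ℝ, ∀ f : C(X, X), |F f| ≤ M := by
  classical
  haveI : TotallySeparatedSpace X := loc_compact_t2_tot_disc_iff_tot_sep.mp inferInstance
  -- there are infinitely many clopen subsets of `X`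
  haveI hinf : Infinite {U : Set X // IsClopen U} := by
    by_contra h
    rw [not_infinite_iff_finite] at h
    have hinj : Function.Injective
        (fun (x : X) (U : {U : Set X // IsClopen U}) => x ∈ U.1) := by
      intro x y hxy
      by_contra hne
      obtain ⟨U, hU, hx, hy⟩ := exists_isClopen_of_totally_separated hne
      have h2 := congrFun hxy ⟨U, hU⟩
      simp only [eq_iff_iff] at h2
      exact hy (h2.mp hx)
    haveI : Finite X := Finite.of_injective _ hinj
    exact not_finite X
  obtain ⟨a, b, hab⟩ := exists_pair_ne X
  obtain ⟨U, hU, haU, hbU⟩ := exists_isClopen_of_totally_separated hab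
  set e : ℕ ↪ {U : Set X // IsClopen U} := Infinite.natEmbedding _ with he
  have einj : Function.Injective (fun n => (e n).1) := fun m n h =>
    e.injective (Subtype.ext h)
  set c : Set X → ℝ := Function.extend (fun n => (e n).1) (fun n => (n : ℝ)) 0 with hc
  refine ⟨fun f => c (f ⁻¹' U), ?_, ?_⟩
  · -- continuity: the function is locally constant
    apply IsLocallyConstant.continuous
    rw [IsLocallyConstant.iff_exists_open]
    intro f
    refine ⟨{g : C(X, X) | MapsTo g (f ⁻¹' U) U} ∩ {g : C(X, X) | MapsTo g (f ⁻¹' Uᶜ) Uᶜ},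
      ?_, ⟨fun x hx => hx, fun x hx => hx⟩, ?_⟩
    · exact (ContinuousMap.isOpen_setOf_mapsTo
          ((hU.preimage f.continuous).isClosed.isCompact) hU.isOpen).inter
        (ContinuousMap.isOpen_setOf_mapsTo
          ((hU.compl.preimage f.continuous).isClosed.isCompact) hU.compl.isOpen)
    · rintro g ⟨h1, h2⟩
      have hgf : g ⁻¹' U = f ⁻¹' U := by
        apply subset_antisymm
        · intro x hx
          by_contra hxf
          exact h2 hxf hx
        · exact h1
      simp only [hgf]
  · -- unboundedness
    rintro ⟨M, hM⟩
    obtain ⟨n, hn⟩ := exists_nat_gt M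
    set S : Set X := (e n).1 with hS
    have hSclopen : IsClopen S := (e n).2
    have hfrontier : ∀ x ∈ frontier S, (fun _ : X => a) x = (fun _ : X => b) x := by
      rw [hSclopen.frontier_eq]; intro x hx; exact absurd hx (notMem_empty x)
    set fS : C(X, X) := ⟨S.piecewise (fun _ => a) (fun _ => b),
      Continuous.piecewise hfrontier continuous_const continuous_const⟩ with hfS
    have hpre : fS ⁻¹' U = S := by
      ext x
      by_cases hx : x ∈ S
      · simp [hfS, Set.piecewise, hx, haU]
      · simp [hfS, Set.piecewise, hx]
        exact fun h => absurd h hbU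
    have hval : c (fS ⁻¹' U) = n := by
      rw [hpre, hS, hc, einj.extend_apply]
    have h3 := hM fS
    simp only [hval] at h3
    have : (n : ℝ) ≤ M := le_trans (le_abs_self _) h3
    linarith
end

section
/- Let X be an infinite compact Hausdorff totally disconnected (equivalently, zero-dimensional) space. Then there exist two disjoint subsets U and V of C_k(X,X), each of which is a union of countably many clopen subsets of C_k(X,X) (hence each is an open Fσ cozero-set), such that the identity map of X belongs to both the closure of U and the closure of V. In particular, C_k(X,X) is not an F-space. -/
open Set Topology TopologicalSpace

/-- A cozero-set of a topological space. -/
def IsCozero {Y : Type*} [TopologicalSpace Y] (s : Set Y) : Prop :=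
  ∃ g : Y → ℝ, Continuous g ∧ s = {y | g y ≠ 0}

/-- Two sets are completely separated if some continuous real-valued function is `0` on the
first and `1` on the second. -/
def CompletelySeparated {Y : Type*} [TopologicalSpace Y] (A B : Set Y) : Prop :=
  ∃ h : Y → ℝ, Continuous h ∧ (∀ a ∈ A, h a = 0) ∧ (∀ b ∈ B, h b = 1)

/-- A space is an F-space if any two disjoint cozero-sets are completely separated. -/
def IsFSpace (Y : Type*) [TopologicalSpace Y] : Prop :=
  ∀ A B : Set Y, IsCozero A → IsCozero B → A ∩ B = ∅ → CompletelySeparated A B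

section Patch

variable {X : Type*} [TopologicalSpace X]

open Classical in
/-- Patch a list of (clopen set, value) pairs over the identity: first match wins. -/
noncomputable def patchFn : List (Set X × X) → X → X
  | [] => fun x => x
  | p :: L => fun x => if x ∈ p.1 then p.2 else patchFn L x

lemma patchFn_continuous (L : List (Set X × X)) (h : ∀ p ∈ L, IsClopen p.1) :
    Continuous (patchFn L) := by
  classical
  induction L with
  | nil => exact continuous_id
  | cons p L ih =>
    have hp : IsClopen p.1 := h p (List.mem_cons_self)
    have hL : Continuous (patchFn L) := ih fun q hq => h q (List.mem_cons_of_mem _ hq)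
    show Continuous fun x => if x ∈ p.1 then p.2 else patchFn L x
    refine Continuous.if ?_ continuous_const hL
    intro a ha
    rw [Set.setOf_mem_eq, hp.frontier_eq] at ha
    exact absurd ha (Set.notMem_empty a)

lemma patchFn_cases (L : List (Set X × X)) (x : X) :
    (∃ p ∈ L, x ∈ p.1 ∧ patchFn L x = p.2) ∨ ((∀ p ∈ L, x ∉ p.1) ∧ patchFn L x = x) := by
  induction L with
  | nil => exact Or.inr ⟨by simp, rfl⟩
  | cons p L ih =>
    by_cases hx : x ∈ p.1
    · exact Or.inl ⟨p, List.mem_cons_self, hx, by simp [patchFn, hx]⟩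
    · have he : patchFn (p :: L) x = patchFn L x := by simp [patchFn, hx]
      rcases ih with ⟨q, hq, hxq, hval⟩ | ⟨hnone, hval⟩
      · exact Or.inl ⟨q, List.mem_cons_of_mem _ hq, hxq, he.trans hval⟩
      · refine Or.inr ⟨?_, he.trans hval⟩
        intro q hq
        rcases List.mem_cons.mp hq with rfl | hq
        · exact hx
        · exact hnone q hq

lemma patchFn_head (p : Set X × X) (L : List (Set X × X)) {x : X} (hx : x ∈ p.1) :
    patchFn (p :: L) x = p.2 := by simp [patchFn, hx]

end Patch

/-- In an infinite compact Hausdorff totally disconnected space there is a sequence of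
pairwise disjoint nonempty clopen sets. -/
lemma exists_disjoint_clopen_seq (X : Type*) [TopologicalSpace X] [CompactSpace X] [T2Space X]
    [TotallyDisconnectedSpace X] [Infinite X] :
    ∃ C : ℕ → Set X, (∀ n, IsClopen (C n)) ∧ (∀ n, (C n).Nonempty) ∧
      ∀ m n, m ≠ n → Disjoint (C m) (C n) := by
  classical
  have step : ∀ R : Set X, IsClopen R → R.Infinite →
      ∃ E, IsClopen E ∧ E.Nonempty ∧ E ⊆ R ∧ (R \ E).Infinite := by
    intro R hR hRinf
    obtain ⟨x, hx, y, hy, hxy⟩ := hRinf.nontrivial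
    obtain ⟨V, hV, hxV, hVy⟩ := compact_exists_isClopen_in_isOpen
      (isOpen_compl_singleton (x := y)) (by simpa using hxy)
    by_cases h : (R \ (R ∩ V)).Infinite
    · exact ⟨R ∩ V, hR.inter hV, ⟨x, hx, hxV⟩, Set.inter_subset_left, h⟩
    · have hfin : (R \ (R ∩ V)).Finite := Set.not_infinite.mp h
      have hD1inf : (R ∩ V).Infinite := by
        have := hRinf.diff hfin
        rwa [Set.diff_diff_cancel_left Set.inter_subset_left] at this
      refine ⟨R \ (R ∩ V), hR.diff (hR.inter hV), ⟨y, hy, ?_⟩, Set.diff_subset, ?_⟩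
      · exact fun hyD => hVy hyD.2 rfl
      · rw [Set.diff_diff_cancel_left Set.inter_subset_left]
        exact hD1inf
  choose! E h1 h2 h3 h4 using step
  let R : ℕ → Set X := fun n => Nat.rec Set.univ (fun _ Rn => Rn \ E Rn) n
  have hRsucc : ∀ n, R (n + 1) = R n \ E (R n) := fun n => rfl
  have hinv : ∀ n, IsClopen (R n) ∧ (R n).Infinite := by
    intro n
    induction n with
    | zero => exact ⟨isClopen_univ, Set.infinite_univ⟩
    | succ n ih =>
      refine ⟨(ih.1).diff (h1 _ ih.1 ih.2), ?_⟩
      rw [hRsucc]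
      exact h4 _ ih.1 ih.2
  have hRanti : Antitone R := by
    apply antitone_nat_of_succ_le
    intro n
    rw [hRsucc]
    exact Set.diff_subset
  refine ⟨fun n => E (R n), fun n => h1 _ (hinv n).1 (hinv n).2,
    fun n => h2 _ (hinv n).1 (hinv n).2, ?_⟩
  have key : ∀ m n, m < n → Disjoint (E (R m)) (E (R n)) := by
    intro m n hmn
    rw [Set.disjoint_right]
    intro a haN
    have h1' : a ∈ R n := h3 _ (hinv n).1 (hinv n).2 haN
    have h2' : a ∈ R (m + 1) := hRanti (by omega : m + 1 ≤ n) h1'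
    rw [hRsucc] at h2'
    exact h2'.2
  intro m n hmn
  rcases lt_or_gt_of_ne hmn with h | h
  · exact key m n h
  · exact (key n m h).symm

/-- The key approximation lemma: given finitely many subbasic compact-open constraints
satisfied by the identity, and a sequence of nonempty sets `C n`, there is a threshold `M`
such that for every `N ≥ M` there is a continuous self-map satisfying the constraints that
maps the closure of `⋃ n, C n` into `C 0 ∪ ... ∪ C N` and hits `C N`. -/
lemma approx_lemma {X : Type*} [TopologicalSpace X] [CompactSpace X] [T2Space X]
    [TotallyDisconnectedSpace X]
    (C : ℕ → Set X) (hCne : ∀ n, (C n).Nonempty)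
    (F : Set (Set C(X, X))) (hFfin : F.Finite)
    (K O : Set C(X, X) → Set X)
    (hK : ∀ m ∈ F, IsCompact (K m)) (hO : ∀ m ∈ F, IsOpen (O m))
    (hKO : ∀ m ∈ F, K m ⊆ O m)
    (hmeq : ∀ m ∈ F, m = {f : C(X, X) | Set.MapsTo f (K m) (O m)}) :
    ∃ M : ℕ, ∀ N, M ≤ N → ∃ f : C(X, X), (∀ m ∈ F, f ∈ m) ∧
      Set.MapsTo f (closure (⋃ n, C n)) (⋃ k ∈ Finset.range (N + 1), C k) ∧
      ∃ y ∈ closure (⋃ n, C n), f y ∈ C N := by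
  classical
  set Y := closure (⋃ n, C n) with hYdef
  have hW : ∀ x : X, ∃ W : Set X, IsClopen W ∧ x ∈ W ∧
      ∀ m ∈ F, W ⊆ O m ∨ Disjoint W (K m) := by
    intro x
    have hGopen : IsOpen (⋂ m ∈ F, if x ∈ O m then O m else (K m)ᶜ) := by
      refine hFfin.isOpen_biInter fun m hm => ?_
      by_cases hxm : x ∈ O m
      · simpa [hxm] using hO m hm
      · simpa [hxm] using (hK m hm).isClosed.isOpen_compl
    have hxG : x ∈ ⋂ m ∈ F, if x ∈ O m then O m else (K m)ᶜ := by
      refine Set.mem_iInter₂.mpr fun m hm => ?_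
      by_cases hxm : x ∈ O m
      · simpa [hxm]
      · simp only [hxm, if_false]
        exact fun hxK => hxm (hKO m hm hxK)
    obtain ⟨W, hWcl, hxW, hWG⟩ := compact_exists_isClopen_in_isOpen hGopen hxG
    refine ⟨W, hWcl, hxW, fun m hm => ?_⟩
    have hsub : W ⊆ (if x ∈ O m then O m else (K m)ᶜ) :=
      hWG.trans (Set.biInter_subset_of_mem hm)
    by_cases hxm : x ∈ O m
    · left; simpa [hxm] using hsub
    · right
      rw [if_neg hxm] at hsub
      exact Set.disjoint_left.mpr fun a haW haK => hsub haW haK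
  choose W hWcl hxW hWprop using hW
  obtain ⟨s, hs⟩ := isCompact_univ.elim_finite_subcover W (fun x => (hWcl x).isOpen)
    (fun x _ => Set.mem_iUnion.mpr ⟨x, hxW x⟩)
  have hpick : ∀ x : X, ∃ (k : ℕ) (c : X), (W x ∩ Y).Nonempty → c ∈ W x ∧ c ∈ C k := by
    intro x
    by_cases h : (W x ∩ Y).Nonempty
    · obtain ⟨y, hyW, hyY⟩ := h
      have h2 : (W x ∩ ⋃ n, C n).Nonempty :=
        mem_closure_iff.mp hyY (W x) (hWcl x).isOpen hyW
      obtain ⟨c, hcW, hc⟩ := h2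
      obtain ⟨k, hck⟩ := Set.mem_iUnion.mp hc
      exact ⟨k, c, fun _ => ⟨hcW, hck⟩⟩
    · exact ⟨0, (hCne 0).choose, fun hh => absurd hh h⟩
  choose k c hkc using hpick
  refine ⟨s.sup k, fun N hN => ?_⟩
  obtain ⟨xs, hxs⟩ := hCne N
  set t := s.filter (fun x => (W x ∩ Y).Nonempty) with ht
  set L : List (Set X × X) := (W xs, xs) :: t.toList.map (fun x => (W x, c x)) with hL
  have hLcl : ∀ p ∈ L, IsClopen p.1 := by
    intro p hp
    rcases List.mem_cons.mp hp with rfl | hp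
    · exact hWcl xs
    · obtain ⟨x, hx, rfl⟩ := List.mem_map.mp hp
      exact hWcl x
  have hLw : ∀ p ∈ L, ∃ z : X, p.1 = W z ∧ p.2 ∈ W z := by
    intro p hp
    rcases List.mem_cons.mp hp with rfl | hp
    · exact ⟨xs, rfl, hxW xs⟩
    · obtain ⟨x, hx, rfl⟩ := List.mem_map.mp hp
      have hxt : x ∈ t := Finset.mem_toList.mp hx
      exact ⟨x, rfl, (hkc x (Finset.mem_filter.mp hxt).2).1⟩
  set f : C(X, X) := ⟨patchFn L, patchFn_continuous L hLcl⟩ with hf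
  have hfeq : ∀ x : X, f x = patchFn L x := fun _ => rfl
  refine ⟨f, ?_, ?_, ?_⟩
  · intro m hm
    rw [hmeq m hm]
    intro x hxK
    show f x ∈ O m
    rcases patchFn_cases L x with ⟨p, hpL, hxp, hval⟩ | ⟨_, hval⟩
    · obtain ⟨z, hz1, hz2⟩ := hLw p hpL
      rcases hWprop z m hm with hsub | hdis
      · rw [hfeq, hval]
        exact hsub (hz1 ▸ hz2)
      · rw [hz1] at hxp
        exact absurd hxK (Set.disjoint_left.mp hdis hxp)
    · rw [hfeq, hval]
      exact hKO m hm hxK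
  · intro y hyY
    rcases patchFn_cases L y with ⟨p, hpL, hyp, hval⟩ | ⟨hnone, hval⟩
    · rcases List.mem_cons.mp hpL with rfl | hp
      · show f y ∈ _
        rw [hfeq, hval]
        exact Set.mem_biUnion (Finset.self_mem_range_succ N) hxs
      · obtain ⟨x, hx, rfl⟩ := List.mem_map.mp hp
        have hxt : x ∈ t := Finset.mem_toList.mp hx
        have hxprop := hkc x (Finset.mem_filter.mp hxt).2
        have hkx : k x ≤ N := le_trans (Finset.le_sup (Finset.mem_filter.mp hxt).1) hN
        show f y ∈ _
        rw [hfeq, hval]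
        exact Set.mem_biUnion (Finset.mem_range.mpr (Nat.lt_succ_of_le hkx)) hxprop.2
    · exfalso
      have hy' : y ∈ ⋃ x ∈ s, W x := hs (Set.mem_univ y)
      obtain ⟨x, hxs', hyW⟩ := Set.mem_iUnion₂.mp hy'
      have hxt : x ∈ t := Finset.mem_filter.mpr ⟨hxs', ⟨y, hyW, hyY⟩⟩
      have hmem : (W x, c x) ∈ L :=
        List.mem_cons_of_mem _ (List.mem_map.mpr ⟨x, Finset.mem_toList.mpr hxt, rfl⟩)
      exact hnone _ hmem hyW
  · refine ⟨xs, subset_closure (Set.mem_iUnion.mpr ⟨N, hxs⟩), ?_⟩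
    show f xs ∈ C N
    rw [hfeq, patchFn_head _ _ (hxW xs)]
    exact hxs

/-- For an infinite compact Hausdorff zero-dimensional (totally disconnected) space `X`, there
are two disjoint subsets of `C_k(X, X)`, each a countable union of clopen sets, whose closures
both contain the identity map. In particular `C_k(X, X)` is not an F-space. -/
theorem continuousMaps_not_FSpace
    (X : Type*) [TopologicalSpace X] [CompactSpace X] [T2Space X]
    [TotallyDisconnectedSpace X] [Infinite X] :
    (∃ U V : Set C(X, X), U ∩ V = ∅ ∧
      (∃ u : ℕ → Set C(X, X), (∀ n, IsClopen (u n)) ∧ U = ⋃ n, u n) ∧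
      (∃ v : ℕ → Set C(X, X), (∀ n, IsClopen (v n)) ∧ V = ⋃ n, v n) ∧
      ContinuousMap.id X ∈ closure U ∧ ContinuousMap.id X ∈ closure V) ∧
    ¬IsFSpace C(X, X) := by
  classical
  obtain ⟨C, hCcl, hCne, hCdisj⟩ := exists_disjoint_clopen_seq X
  set Y := closure (⋃ n, C n) with hYdef
  have hYcomp : IsCompact Y := isClosed_closure.isCompact
  set B : ℕ → Set X := fun m => ⋃ k ∈ Finset.range (m + 1), C k with hB
  have hBcl : ∀ m, IsClopen (B m) := fun m => isClopen_biUnion_finset fun k _ => hCcl k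
  have hBmono : ∀ a b : ℕ, a ≤ b → B a ⊆ B b := by
    intro a b hab
    refine Set.iUnion₂_subset fun k hk => ?_
    exact Set.subset_biUnion_of_mem
      (Finset.mem_range.mpr (lt_of_lt_of_le (Finset.mem_range.mp hk) (by omega)))
  set D : ℕ → Set C(X, X) := fun m => {f | Set.MapsTo f Y (B m)} with hD
  have hDcl : ∀ m, IsClopen (D m) :=
    fun m => ContinuousMap.isClopen_setOf_mapsTo hYcomp (hBcl m)
  have hDmono : ∀ a b : ℕ, a ≤ b → D a ⊆ D b :=
    fun a b hab f hf => hf.mono_right (hBmono a b hab)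
  set u : ℕ → Set C(X, X) := fun n => D (2 * n + 2) \ D (2 * n + 1) with hu
  set v : ℕ → Set C(X, X) := fun n => D (2 * n + 1) \ D (2 * n) with hv
  set U := ⋃ n, u n with hU
  set V := ⋃ n, v n with hV
  have hucl : ∀ n, IsClopen (u n) := fun n => (hDcl _).diff (hDcl _)
  have hvcl : ∀ n, IsClopen (v n) := fun n => (hDcl _).diff (hDcl _)
  have hUV : U ∩ V = ∅ := by
    ext f
    simp only [hU, hV, Set.mem_inter_iff, Set.mem_iUnion, Set.mem_empty_iff_false, iff_false,
      not_and]
    rintro ⟨n, hfn⟩ ⟨m, hfm⟩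
    rcases le_or_gt (2 * m + 1) (2 * n + 1) with h | h
    · exact hfn.2 (hDmono _ _ h hfm.1)
    · exact hfm.2 (hDmono _ _ (by omega : 2 * n + 2 ≤ 2 * m) hfn.1)
  have hbasis := TopologicalSpace.isTopologicalBasis_of_subbasis
    (ContinuousMap.compactOpen_eq (X := X) (Y := X))
  -- the main approximation step, packaged for reuse
  have main : ∀ o ∈ (fun F : Set (Set C(X, X)) => ⋂₀ F) ''
      {F : Set (Set C(X, X)) | F.Finite ∧
        F ⊆ Set.image2 (fun K U => {f : C(X, X) | Set.MapsTo f K U})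
          {K : Set X | IsCompact K} {t : Set X | IsOpen t}},
      ContinuousMap.id X ∈ o →
      ∃ M : ℕ, ∀ N, M ≤ N → ∃ f : C(X, X), f ∈ o ∧ Set.MapsTo f Y (B N) ∧
        ∃ y ∈ Y, f y ∈ C N := by
    rintro o ⟨F, ⟨hFfin, hFsub⟩, rfl⟩ hido
    have hFS : ∀ m ∈ F, ∃ KO : Set X × Set X, IsCompact KO.1 ∧ IsOpen KO.2 ∧ KO.1 ⊆ KO.2 ∧
        m = {f : C(X, X) | Set.MapsTo f KO.1 KO.2} := by
      intro m hm
      obtain ⟨K, hK, O, hO, hKOm⟩ := Set.mem_image2.mp (hFsub hm)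
      have hidm : ContinuousMap.id X ∈ m := Set.mem_sInter.mp hido m hm
      rw [← hKOm] at hidm
      have hsub : K ⊆ O := by
        intro x hx
        simpa using hidm hx
      exact ⟨(K, O), hK, hO, hsub, hKOm.symm⟩
    choose! KO h1 h2 h3 h4 using hFS
    obtain ⟨M, hM⟩ := approx_lemma C hCne F hFfin (fun m => (KO m).1) (fun m => (KO m).2)
      h1 h2 h3 h4
    refine ⟨M, fun N hN => ?_⟩
    obtain ⟨f, hfF, hfmap, hy⟩ := hM N hN
    exact ⟨f, Set.mem_sInter.mpr hfF, hfmap, hy⟩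
  have hclU : ContinuousMap.id X ∈ closure U := by
    rw [hbasis.mem_closure_iff]
    intro o ho hido
    obtain ⟨M, hM⟩ := main o ho hido
    obtain ⟨f, hfo, hfmap, y, hyY, hyC⟩ := hM (2 * M + 2) (by omega)
    refine ⟨f, hfo, Set.mem_iUnion.mpr ⟨M, ?_⟩⟩
    refine ⟨hfmap, fun hcon => ?_⟩
    have hfy : f y ∈ B (2 * M + 1) := hcon hyY
    obtain ⟨j, hj, hfyj⟩ := Set.mem_iUnion₂.mp hfy
    have hne : j ≠ 2 * M + 2 := by
      have := Finset.mem_range.mp hj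
      omega
    exact Set.disjoint_left.mp (hCdisj j (2 * M + 2) hne) hfyj hyC
  have hclV : ContinuousMap.id X ∈ closure V := by
    rw [hbasis.mem_closure_iff]
    intro o ho hido
    obtain ⟨M, hM⟩ := main o ho hido
    obtain ⟨f, hfo, hfmap, y, hyY, hyC⟩ := hM (2 * M + 1) (by omega)
    refine ⟨f, hfo, Set.mem_iUnion.mpr ⟨M, ?_⟩⟩
    refine ⟨hfmap, fun hcon => ?_⟩
    have hfy : f y ∈ B (2 * M) := hcon hyY
    obtain ⟨j, hj, hfyj⟩ := Set.mem_iUnion₂.mp hfy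
    have hne : j ≠ 2 * M + 1 := by
      have := Finset.mem_range.mp hj
      omega
    exact Set.disjoint_left.mp (hCdisj j (2 * M + 1) hne) hfyj hyC
  have hcoz : ∀ w : ℕ → Set C(X, X), (∀ n, IsClopen (w n)) → IsCozero (⋃ n, w n) := by
    intro w hw
    have hsummable : Summable (fun n : ℕ => ((1 : ℝ) / 2) ^ n) :=
      summable_geometric_of_lt_one (by norm_num) (by norm_num)
    refine ⟨fun f => ∑' n, if f ∈ w n then ((1 : ℝ) / 2) ^ n else 0, ?_, ?_⟩
    · refine continuous_tsum (fun n => ?_) hsummable (fun n x => ?_)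
      · refine Continuous.if ?_ continuous_const continuous_const
        intro a ha
        rw [Set.setOf_mem_eq, (hw n).frontier_eq] at ha
        exact absurd ha (Set.notMem_empty a)
      · rw [Real.norm_eq_abs]
        split
        · rw [abs_of_nonneg (by positivity)]
        · rw [abs_zero]
          positivity
    · ext f
      simp only [Set.mem_iUnion, Set.mem_setOf_eq]
      constructor
      · rintro ⟨n, hn⟩
        have hsum : Summable (fun m : ℕ => if f ∈ w m then ((1 : ℝ) / 2) ^ m else 0) := by
          refine Summable.of_nonneg_of_le (fun m => ?_) (fun m => ?_) hsummable
          · split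
            · positivity
            · exact le_refl 0
          · split
            · exact le_refl _
            · positivity
        have hpos : 0 < ∑' m, (if f ∈ w m then ((1 : ℝ) / 2) ^ m else 0) := by
          refine Summable.tsum_pos hsum (fun m => ?_) n ?_
          · split
            · positivity
            · exact le_refl 0
          · rw [if_pos hn]
            positivity
        exact ne_of_gt hpos
      · intro hne
        by_contra hall
        push_neg at hall
        apply hne
        have hzero : ∀ m, (if f ∈ w m then ((1 : ℝ) / 2) ^ m else 0) = 0 :=
          fun m => if_neg (hall m)
        calc (∑' m, if f ∈ w m then ((1 : ℝ) / 2) ^ m else 0)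
            = ∑' _ : ℕ, (0 : ℝ) := tsum_congr hzero
          _ = 0 := tsum_zero
  refine ⟨⟨U, V, hUV, ⟨u, hucl, rfl⟩, ⟨v, hvcl, rfl⟩, hclU, hclV⟩, ?_⟩
  intro hFsp
  obtain ⟨h, hcont, h0, h1⟩ := hFsp U V (hcoz u hucl) (hcoz v hvcl) hUV
  have e0 : h (ContinuousMap.id X) = 0 := by
    have hmem : h (ContinuousMap.id X) ∈ closure ({0} : Set ℝ) :=
      map_mem_closure hcont hclU fun a ha => h0 a ha
    rwa [closure_singleton, Set.mem_singleton_iff] at hmem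
  have e1 : h (ContinuousMap.id X) = 1 := by
    have hmem : h (ContinuousMap.id X) ∈ closure ({1} : Set ℝ) :=
      map_mem_closure hcont hclV fun a ha => h1 a ha
    rwa [closure_singleton, Set.mem_singleton_iff] at hmem
  exact zero_ne_one (e0.symm.trans e1)
end

section
/- Let X be a compact Hausdorff space and p ∈ X. If p is a P-point of X, then the constant map f_p ∈ C(X,X) with value p is a P-point of C_k(X,X); and if p is a weak P-point of X, then f_p is a weak P-point of C_k(X,X). -/
open Set TopologicalSpace

/-- A point `p` is a P-point if every countable intersection of open sets containing `p`
is a neighbourhood of `p`. -/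
def IsPPoint {Y : Type*} [TopologicalSpace Y] (p : Y) : Prop :=
  ∀ U : ℕ → Set Y, (∀ n, IsOpen (U n) ∧ p ∈ U n) → (⋂ n, U n) ∈ nhds p

/-- A point `p` is a weak P-point if it is not in the closure of any countable set avoiding
`p`. -/
def IsWeakPPoint {Y : Type*} [TopologicalSpace Y] (p : Y) : Prop :=
  ∀ S : Set Y, S.Countable → p ∉ S → p ∉ closure S


/-- Every open set in the compact-open topology containing the constant map `p` contains
`{g | MapsTo g univ V}` for some open `V ∋ p`. -/
lemma key_nhd {X : Type*} [TopologicalSpace X] {p : X} {O : Set C(X, X)}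
    (hO : IsOpen O) (hp : ContinuousMap.const X p ∈ O) :
    ∃ V : Set X, IsOpen V ∧ p ∈ V ∧ {g : C(X, X) | Set.MapsTo g Set.univ V} ⊆ O := by
  have h : GenerateOpen (image2 (fun K U ↦ {f : C(X, X) | MapsTo f K U})
      {K : Set X | IsCompact K} {U : Set X | IsOpen U}) O := hO
  clear hO
  revert hp
  induction h with
  | basic s hs =>
    intro hp
    obtain ⟨K, hK, U, hU, rfl⟩ := hs
    by_cases hKne : K.Nonempty
    · obtain ⟨x, hx⟩ := hKne
      have hpU : p ∈ U := hp hx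
      exact ⟨U, hU, hpU, fun g hg y hy ↦ hg (mem_univ y)⟩
    · refine ⟨univ, isOpen_univ, mem_univ _, fun g _ y hy ↦ ?_⟩
      exact absurd ⟨y, hy⟩ hKne
  | univ => exact fun _ ↦ ⟨univ, isOpen_univ, mem_univ _, fun _ _ ↦ mem_univ _⟩
  | inter s t hgs hgt ihs iht =>
    intro hp
    obtain ⟨V₁, hV₁, hpV₁, h₁⟩ := ihs hp.1
    obtain ⟨V₂, hV₂, hpV₂, h₂⟩ := iht hp.2
    exact ⟨V₁ ∩ V₂, hV₁.inter hV₂, ⟨hpV₁, hpV₂⟩,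
      fun g hg ↦ ⟨h₁ (fun y hy ↦ (hg hy).1), h₂ (fun y hy ↦ (hg hy).2)⟩⟩
  | sUnion S hgS ih =>
    intro hp
    obtain ⟨s, hsS, hps⟩ := hp
    obtain ⟨V, hV, hpV, hsub⟩ := ih s hsS hps
    exact ⟨V, hV, hpV, fun g hg ↦ ⟨s, hsS, hsub hg⟩⟩

/-- For a compact Hausdorff space `X` and `p ∈ X`: if `p` is a (weak) P-point of `X`, then the
constant map with value `p` is a (weak) P-point of `C_k(X, X)`. -/
theorem const_isPPoint_and_weakPPoint
    (X : Type*) [TopologicalSpace X] [CompactSpace X] [T2Space X] (p : X) :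
    (IsPPoint p → IsPPoint (ContinuousMap.const X p)) ∧
    (IsWeakPPoint p → IsWeakPPoint (ContinuousMap.const X p)) := by
  constructor
  · intro hP U hU
    -- choose V n for each n
    have : ∀ n, ∃ V : Set X, IsOpen V ∧ p ∈ V ∧
        {g : C(X, X) | Set.MapsTo g Set.univ V} ⊆ U n := by
      intro n
      obtain ⟨hopen, hmem⟩ := hU n
      exact key_nhd hopen hmem
    choose V hVopen hVmem hVsub using this
    have hW : (⋂ n, V n) ∈ nhds p := hP V fun n ↦ ⟨hVopen n, hVmem n⟩
    obtain ⟨O, hOsub, hOopen, hpO⟩ := mem_nhds_iff.mp hW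
    have hMopen : IsOpen {g : C(X, X) | Set.MapsTo g Set.univ O} :=
      ContinuousMap.isOpen_setOf_mapsTo isCompact_univ hOopen
    refine Filter.mem_of_superset (hMopen.mem_nhds ?_) ?_
    · exact fun y _ ↦ hpO
    · intro g hg
      refine Set.mem_iInter.mpr fun n ↦ hVsub n fun y hy ↦ ?_
      have := hOsub (hg hy)
      exact Set.mem_iInter.mp this n
  · intro hW S hScount hpS hclos
    -- pick for each f ∈ S a witness point where f differs from const p
    have hwit : ∀ f ∈ S, ∃ x : X, f x ≠ p := by
      intro f hf
      by_contra h
      push_neg at h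
      apply hpS
      have : f = ContinuousMap.const X p := by
        ext x; exact h x
      rwa [← this]
    have : Nonempty X := ⟨p⟩
    choose! x hx using hwit
    set T : Set X := (fun f : C(X, X) ↦ f (x f)) '' S with hT
    have hTcount : T.Countable := hScount.image _
    have hpT : p ∉ T := by
      rintro ⟨f, hf, hfx⟩
      exact hx f hf hfx
    have hpclT := hW T hTcount hpT
    set V : Set X := (closure T)ᶜ with hVdef
    have hVopen : IsOpen V := isClosed_closure.isOpen_compl
    have hpV : p ∈ V := hpclT
    have hMopen : IsOpen {g : C(X, X) | Set.MapsTo g Set.univ V} :=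
      ContinuousMap.isOpen_setOf_mapsTo isCompact_univ hVopen
    have hMmem : ContinuousMap.const X p ∈ {g : C(X, X) | Set.MapsTo g Set.univ V} :=
      fun y _ ↦ hpV
    obtain ⟨f, hfM, hfS⟩ := mem_closure_iff.mp hclos _ hMopen hMmem
    have : f (x f) ∈ V := hfM (Set.mem_univ (x f))
    exact this (subset_closure ⟨f, hfS, rfl⟩)
end

section
/- Let X be a locally compact Hausdorff totally disconnected (equivalently, zero-dimensional) space and x ∈ X. Then the evaluation map ev_x : C_k(X,X) → X given by ev_x(f) = f x is continuous and is an open map. -/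
open Set TopologicalSpace

/-- For a locally compact Hausdorff zero-dimensional (totally disconnected) space `X` and
`x ∈ X`, the evaluation map `f ↦ f x` on `C_k(X, X)` is continuous and open. -/
theorem eval_continuous_and_openMap
    (X : Type*) [TopologicalSpace X] [LocallyCompactSpace X] [T2Space X]
    [TotallyDisconnectedSpace X] (x : X) :
    Continuous (fun f : C(X, X) => f x) ∧ IsOpenMap (fun f : C(X, X) => f x) := by
  refine ⟨continuous_eval_const x, ?_⟩
  intro W hW
  rw [isOpen_iff_mem_nhds]
  rintro _ ⟨f, hfW, rfl⟩
  obtain ⟨t, ⟨S, ⟨hSfin, hSsub⟩, rfl⟩, hft, htW⟩ :=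
    (isTopologicalBasis_of_subbasis (ContinuousMap.compactOpen_eq (X := X) (Y := X))
      ).exists_subset_of_mem_open hfW hW
  classical
  have hKU : ∀ s : Set C(X, X), ∃ K U, IsCompact K ∧ IsOpen U ∧
      (s ∈ S → s = {g : C(X, X) | MapsTo g K U}) := by
    intro s
    by_cases h : s ∈ S
    · obtain ⟨K, hK, U, hU, heq⟩ := hSsub h
      exact ⟨K, U, hK, hU, fun _ => heq.symm⟩
    · exact ⟨∅, univ, isCompact_empty, isOpen_univ, fun hs => absurd hs h⟩
  choose K U hK hU hs using hKU
  -- f maps each K into the corresponding U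
  have hfKU : ∀ (s : Set C(X, X)) (h : s ∈ S), MapsTo f (K s) (U s) := by
    intro s h
    have := hft s h
    rwa [hs s h] at this
  -- the target neighborhood
  set V : Set X := ⋂ (s : Set C(X, X)), ⋂ (_ : s ∈ S), ⋂ (_ : x ∈ K s), U s with hV
  have hVopen : IsOpen V := by
    exact hSfin.isOpen_biInter fun s _ => isOpen_iInter_of_finite fun _ => hU s
  have hfxV : f x ∈ V := by
    simp only [hV, mem_iInter]
    intro s h hx
    exact hfKU s h hx
  -- an open set avoiding the compacts not containing x
  set O : Set X := ⋂ (s : Set C(X, X)), ⋂ (_ : s ∈ S), ⋂ (_ : x ∉ K s), (K s)ᶜ with hO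
  have hOopen : IsOpen O := by
    exact hSfin.isOpen_biInter fun s _ => isOpen_iInter_of_finite fun _ =>
      (hK s).isClosed.isOpen_compl
  have hxO : x ∈ O := by
    simp only [hO, mem_iInter]
    intro s h hx
    exact hx
  -- a clopen neighborhood of x inside O
  obtain ⟨A, hA, hxA, hAO⟩ :=
    (loc_compact_Haus_tot_disc_of_zero_dim (H := X)).exists_subset_of_mem_open hxO hOopen
  have hAclopen : IsClopen A := hA
  refine Filter.mem_of_superset (hVopen.mem_nhds hfxV) ?_
  intro y hy
  -- modified map: y on A, f elsewhere
  have hcont : Continuous fun z : X => if z ∈ A then y else f z := by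
    apply continuous_if
    · intro a ha
      rw [show {z : X | z ∈ A} = A from rfl, hAclopen.frontier_eq] at ha
      exact absurd ha (notMem_empty a)
    · exact continuous_const.continuousOn
    · exact f.continuous.continuousOn
  refine ⟨⟨fun z => if z ∈ A then y else f z, hcont⟩, htW ?_, by simp [hxA]⟩
  intro s h
  rw [hs s h]
  intro z hz
  by_cases hxK : x ∈ K s
  · have hVU : V ⊆ U s := by
      intro w hw
      simp only [hV, mem_iInter] at hw
      exact hw s h hxK
    by_cases hzA : z ∈ A
    · simpa [hzA] using hVU hy
    · simpa [hzA] using hfKU s h hz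
  · have hzA : z ∉ A := by
      intro hzA
      have := hAO hzA
      simp only [hO, mem_iInter] at this
      exact this s h hxK hz
    simpa [hzA] using hfKU s h hz
end

section
/- Let X be an infinite compact Hausdorff totally disconnected (equivalently, zero-dimensional) space and let h : X ≃ₜ X be a homeomorphism of X onto itself. Then h, regarded as an element of C(X,X), is not a P-point of C_k(X,X). -/
/-- For an infinite compact Hausdorff zero-dimensional (totally disconnected) space `X`, no
self-homeomorphism of `X` is a P-point of `C_k(X, X)`. -/
theorem homeomorph_not_pPoint
    (X : Type*) [TopologicalSpace X] [CompactSpace X] [T2Space X]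
    [TotallyDisconnectedSpace X] [Infinite X] (h : X ≃ₜ X) :
    ¬IsPPoint ((h : C(X, X)) : C(X, X)) := by
  classical
  letI : UniformSpace X := uniformSpaceOfCompactR1
  intro hP
  -- an injective sequence and a cluster point of it
  have hy : Function.Injective (Infinite.natEmbedding X) := (Infinite.natEmbedding X).injective
  set y : ℕ → X := ⇑(Infinite.natEmbedding X) with hydef
  obtain ⟨p, -, hp⟩ : ∃ p ∈ (Set.univ : Set X), MapClusterPt p Filter.atTop y :=
    isCompact_univ.exists_mapClusterPt (by simp)
  -- clopen sets separating `y n` from `p`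
  have hsep : ∀ n : ℕ, ∃ s : Set X, IsClopen s ∧ p ∉ s ∧ (y n ≠ p → y n ∈ s) := by
    intro n
    by_cases hn : y n = p
    · exact ⟨∅, isClopen_empty, Set.notMem_empty _, fun hc => absurd hn hc⟩
    · obtain ⟨s, hs, hyn, hps⟩ := exists_isClopen_of_totally_separated hn
      exact ⟨s, hs, hps, fun _ => hyn⟩
  choose C hCclopen hpC hyC using hsep
  -- the open sets
  set U : ℕ → Set C(X, X) := fun n => {f : C(X, X) | f p ∉ h '' C n} with hU
  have hUopen : ∀ n, IsOpen (U n) := by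
    intro n
    have hclosed : IsClosed (h '' C n) :=
      (((hCclopen n).isClosed.isCompact).image h.continuous).isClosed
    exact hclosed.isOpen_compl.preimage (ContinuousEvalConst.continuous_eval_const p)
  have hhU : ∀ n, (h : C(X, X)) ∈ U n := by
    intro n hmem
    obtain ⟨c, hc, hch⟩ := hmem
    exact hpC n (h.injective hch ▸ hc)
  have hmem : (⋂ n, U n) ∈ nhds (h : C(X, X)) := hP U fun n => ⟨hUopen n, hhU n⟩
  -- uniform structure on C(X,X)
  obtain ⟨V, hV, hVsub⟩ :=
    ((nhds_basis_uniformity'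
      ContinuousMap.hasBasis_compactConvergenceUniformity_of_compact).mem_iff.1 hmem)
  obtain ⟨W, hW, hWsymm, hWV⟩ := comp_symm_mem_uniformity_sets hV
  -- a clopen neighbourhood of p mapping into the W-ball around h p
  have hball : (fun x => h x) ⁻¹' {z | (h p, z) ∈ W} ∈ nhds p :=
    h.continuous.continuousAt (mem_nhds_left (h p) hW)
  obtain ⟨O, hOsub, hOopen, hpO⟩ := mem_nhds_iff.1 hball
  obtain ⟨D, hDclopen, hpD, hDO⟩ := compact_exists_isClopen_in_isOpen hOopen hpO
  -- find n with y n ∈ D, y n ≠ p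
  have hfreq : ∃ᶠ n in Filter.atTop, y n ∈ D := by
    exact mapClusterPt_iff_frequently.1 hp D (hDclopen.isOpen.mem_nhds hpD)
  have hev : ∀ᶠ n in Filter.atTop, y n ≠ p := by
    rw [← Nat.cofinite_eq_atTop]
    have : (y ⁻¹' {p}).Finite := (Set.finite_singleton p).preimage hy.injOn
    filter_upwards [this.eventually_cofinite_notMem] with n hn
    simpa using hn
  obtain ⟨n, hnD, hnp⟩ := (hfreq.and_eventually hev).exists
  -- the perturbed map
  have hσcont : Continuous (D.piecewise (fun _ => y n) id) :=
    Continuous.piecewise (by simp [hDclopen.frontier_eq]) continuous_const continuous_id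
  set g : C(X, X) := (h : C(X, X)).comp ⟨D.piecewise (fun _ => y n) id, hσcont⟩ with hg
  have hgball : ∀ x : X, ((h : C(X, X)) x, g x) ∈ V := by
    intro x
    by_cases hx : x ∈ D
    · have h1 : (h p, h x) ∈ W := hOsub (hDO hx)
      have h2 : (h p, h (y n)) ∈ W := hOsub (hDO hnD)
      have : (h x, h (y n)) ∈ SetRel.comp W W := ⟨h p, SetRel.symm W h1, h2⟩
      simpa [hg, Set.piecewise, hx] using hWV this
    · simpa [hg, Set.piecewise, hx] using refl_mem_uniformity hV
  have hgmem : g ∈ ⋂ n, U n := hVsub hgball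
  have : g p ∈ h '' C n := by
    have hgp : g p = h (y n) := by simp [hg, Set.piecewise, hpD]
    exact hgp ▸ ⟨y n, hyC n hnp, rfl⟩
  exact (Set.mem_iInter.1 hgmem n) this
end

section
/- The space C_k(ω*,ω*) contains a P-point if and only if ω* contains a P-point. -/
section Aux

open Set Filter Topology TopologicalSpace

/-- Each point of `ℕ` is isolated in `βℕ`. -/
lemma stoneCech_singleton_isOpen (n : ℕ) :
    IsOpen ({stoneCechUnit n} : Set (StoneCech ℕ)) := by
  classical
  have hcont : Continuous (fun m : ℕ => decide (m = n)) := continuous_of_discreteTopology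
  have hg : Continuous (stoneCechExtend hcont) := continuous_stoneCechExtend hcont
  have hO : IsOpen (stoneCechExtend hcont ⁻¹' {true}) :=
    (isOpen_discrete _).preimage hg
  have hsub : stoneCechExtend hcont ⁻¹' {true} ∩ Set.range stoneCechUnit
      ⊆ {stoneCechUnit n} := by
    rintro z ⟨hz, m, rfl⟩
    have hm : stoneCechExtend hcont (stoneCechUnit m) = decide (m = n) :=
      congrFun (stoneCechExtend_extends hcont) m
    have hd : decide (m = n) = true := by
      rw [← hm]; exact hz
    have hmn : m = n := by simpa using hd
    simp [hmn]
  have key : stoneCechExtend hcont ⁻¹' {true} = {stoneCechUnit n} := by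
    apply Set.Subset.antisymm
    · intro z hz
      have h1 := denseRange_stoneCechUnit.open_subset_closure_inter hO hz
      have h2 := closure_mono hsub h1
      rwa [closure_singleton] at h2
    · rintro z rfl
      have hm : stoneCechExtend hcont (stoneCechUnit n) = decide (n = n) :=
        congrFun (stoneCechExtend_extends hcont) n
      simp [Set.mem_preimage, hm]
  rw [← key]
  exact hO

lemma stoneCechUnit_nat_injective : Function.Injective (stoneCechUnit : ℕ → StoneCech ℕ) := by
  intro m n h
  classical
  have hcont : Continuous (fun k : ℕ => decide (k = n)) := continuous_of_discreteTopology
  have := eq_if_stoneCechUnit_eq hcont h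
  simpa using this

instance : Nonempty OmegaStar := by
  by_contra h
  have hall : ∀ x : StoneCech ℕ, x ∈ Set.range stoneCechUnit := by
    intro x
    by_contra hx
    exact h ⟨⟨x, hx⟩⟩
  obtain ⟨t, ht⟩ := isCompact_univ.elim_finite_subcover
      (fun n : ℕ => ({stoneCechUnit n} : Set (StoneCech ℕ)))
      (fun n => stoneCech_singleton_isOpen n)
      (by intro x _; rw [← Set.range_eq_iUnion]; exact hall x)
  obtain ⟨m, hm⟩ := Infinite.exists_notMem_finset t
  have hmem : stoneCechUnit m ∈ ⋃ n ∈ t, ({stoneCechUnit n} : Set (StoneCech ℕ)) :=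
    ht (Set.mem_univ _)
  simp only [Set.mem_iUnion, Set.mem_singleton_iff] at hmem
  obtain ⟨n, hn, he⟩ := hmem
  obtain rfl := stoneCechUnit_nat_injective he
  exact hm hn

lemma isOpen_range_stoneCechUnit : IsOpen (Set.range (stoneCechUnit : ℕ → StoneCech ℕ)) := by
  rw [Set.range_eq_iUnion]
  exact isOpen_iUnion fun n => stoneCech_singleton_isOpen n

instance inst_s13 : CompactSpace OmegaStar :=
  isCompact_iff_compactSpace.mp isOpen_range_stoneCechUnit.isClosed_compl.isCompact

instance : TotallySeparatedSpace (StoneCech ℕ) := by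
  classical
  constructor
  intro x _ y _ hxy
  obtain ⟨h, h0, h1, -⟩ :=
    exists_continuous_zero_one_of_isClosed (isClosed_singleton (x := x))
      (isClosed_singleton (x := y)) (by simpa using hxy)
  set A : Set ℕ := {k | h (stoneCechUnit k) < 1/2} with hA
  have hcont : Continuous (fun k : ℕ => decide (k ∈ A)) := continuous_of_discreteTopology
  set g := stoneCechExtend hcont with hgdef
  have hgc : Continuous g := continuous_stoneCechExtend hcont
  have hext : ∀ m : ℕ, g (stoneCechUnit m) = decide (m ∈ A) := fun m =>
    congrFun (stoneCechExtend_extends hcont) m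
  have hkey1 : ∀ z, h z < 1/2 → g z = true := by
    intro z hz
    by_contra hgz
    rw [Bool.not_eq_true] at hgz
    have hO : IsOpen (h ⁻¹' Set.Iio (1/2) ∩ g ⁻¹' {false}) :=
      (isOpen_Iio.preimage h.continuous).inter ((isOpen_discrete _).preimage hgc)
    have hne : (h ⁻¹' Set.Iio (1/2) ∩ g ⁻¹' {false}).Nonempty := ⟨z, hz, hgz⟩
    obtain ⟨w, ⟨hw1, hw2⟩, m, rfl⟩ :=
      denseRange_stoneCechUnit.inter_open_nonempty _ hO hne
    have hmA : m ∈ A := hw1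
    have : g (stoneCechUnit m) = true := by rw [hext m]; simpa using hmA
    rw [Set.mem_singleton_iff.mp hw2] at this
    exact Bool.false_ne_true this
  have hkey2 : ∀ z, 1/2 < h z → g z = false := by
    intro z hz
    by_contra hgz
    rw [Bool.not_eq_false] at hgz
    have hO : IsOpen (h ⁻¹' Set.Ioi (1/2) ∩ g ⁻¹' {true}) :=
      (isOpen_Ioi.preimage h.continuous).inter ((isOpen_discrete _).preimage hgc)
    have hne : (h ⁻¹' Set.Ioi (1/2) ∩ g ⁻¹' {true}).Nonempty := ⟨z, hz, hgz⟩
    obtain ⟨w, ⟨hw1, hw2⟩, m, rfl⟩ :=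
      denseRange_stoneCechUnit.inter_open_nonempty _ hO hne
    have hmA : m ∉ A := by
      intro hmem
      exact absurd (Set.mem_setOf_eq ▸ hmem) (not_lt.mpr (le_of_lt hw1))
    have : g (stoneCechUnit m) = false := by rw [hext m]; simpa using hmA
    rw [Set.mem_singleton_iff.mp hw2] at this
    exact Bool.false_ne_true this.symm
  have hx0 : h x = 0 := by simpa using h0 (Set.mem_singleton x)
  have hy1 : h y = 1 := by simpa using h1 (Set.mem_singleton y)
  refine ⟨g ⁻¹' {true}, g ⁻¹' {false}, (isOpen_discrete _).preimage hgc,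
    (isOpen_discrete _).preimage hgc, ?_, ?_, ?_, ?_⟩
  · have : g x = true := hkey1 x (by rw [hx0]; norm_num)
    simpa using this
  · have : g y = false := hkey2 y (by rw [hy1]; norm_num)
    simpa using this
  · intro z _
    by_cases hb : g z = true
    · exact Or.inl hb
    · exact Or.inr (by rwa [Bool.not_eq_true] at hb)
  · rw [Set.disjoint_left]
    intro z h1z h2z
    have e1 : g z = true := by simpa using h1z
    have e2 : g z = false := by simpa using h2z
    rw [e1] at e2
    exact Bool.false_ne_true e2.symm

/-- Extraction of finite subbasic neighbourhoods in the compact-open topology. -/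
lemma mem_nhds_compactOpen_iff {X Y : Type*} [TopologicalSpace X] [TopologicalSpace Y]
    {f : C(X, Y)} {s : Set C(X, Y)} (h : s ∈ nhds f) :
    ∃ F : Set (Set C(X, Y)), F.Finite ∧
      (∀ S ∈ F, ∃ K U, IsCompact K ∧ IsOpen U ∧ S = {g : C(X, Y) | Set.MapsTo g K U}) ∧
      f ∈ ⋂₀ F ∧ ⋂₀ F ⊆ s := by
  have hb := isTopologicalBasis_of_subbasis (ContinuousMap.compactOpen_eq (X := X) (Y := Y))
  rcases hb.mem_nhds_iff.mp h with ⟨t, ⟨F, ⟨hfin, hsub⟩, rfl⟩, hft, hts⟩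
  refine ⟨F, hfin, ?_, hft, hts⟩
  intro S hS
  rcases Set.mem_image2.mp (hsub hS) with ⟨K, hK, U, hU, rfl⟩
  exact ⟨K, U, hK, hU, rfl⟩

/-- The key property: evaluation at a point is "open at every map". If the preimage of `T`
under evaluation at `x` is a neighbourhood of `f`, then `T` is a neighbourhood of `f x`. -/
lemma eval_mem_nhds (f : C(OmegaStar, OmegaStar)) (x : OmegaStar) {T : Set OmegaStar}
    (hT : (fun g : C(OmegaStar, OmegaStar) => g x) ⁻¹' T ∈ nhds f) : T ∈ nhds (f x) := by
  classical
  obtain ⟨F, hFfin, hFsub, hfF, hFT⟩ := mem_nhds_compactOpen_iff hT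
  haveI : Finite F := hFfin.to_subtype
  choose K U hK hU hS using fun S : F => hFsub S S.2
  set N : Set OmegaStar := ⋂ S : F, (if x ∈ K S then U S else Set.univ) with hN
  have hNopen : IsOpen N := isOpen_iInter_of_finite fun S => by
    by_cases hx : x ∈ K S
    · simpa [hx] using hU S
    · simp [hx]
  have hfxN : f x ∈ N := by
    rw [hN]
    refine Set.mem_iInter.mpr fun S => ?_
    by_cases hx : x ∈ K S
    · have hSr : (S : Set C(OmegaStar, OmegaStar)) = {g : C(OmegaStar, OmegaStar) | Set.MapsTo g (K S) (U S)} := hS S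
      have hfS : f ∈ (S : Set C(OmegaStar, OmegaStar)) := Set.mem_sInter.mp hfF S S.2
      rw [hSr] at hfS
      simpa [hx] using hfS hx
    · simp [hx]
  refine Filter.mem_of_superset (hNopen.mem_nhds hfxN) ?_
  intro y hy
  set O : Set OmegaStar := ⋂ S : F, (if x ∈ K S then Set.univ else (K S)ᶜ) with hO
  have hOopen : IsOpen O := isOpen_iInter_of_finite fun S => by
    by_cases hx : x ∈ K S
    · simp [hx]
    · simpa [hx] using (hK S).isClosed.isOpen_compl
  have hxO : x ∈ O := Set.mem_iInter.mpr fun S => by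
    by_cases hx : x ∈ K S <;> simp [hx]
  obtain ⟨C, hC, hxC, hCO⟩ := compact_exists_isClopen_in_isOpen hOopen hxO
  set g : C(OmegaStar, OmegaStar) :=
    ⟨C.piecewise (fun _ => y) f,
      Continuous.piecewise (by simp [hC.frontier_eq]) continuous_const f.continuous⟩ with hgdef
  have hgF : g ∈ ⋂₀ F := by
    refine Set.mem_sInter.mpr fun S hSF => ?_
    have hSr : S = {g : C(OmegaStar, OmegaStar) | Set.MapsTo g (K ⟨S, hSF⟩) (U ⟨S, hSF⟩)} :=
      hS ⟨S, hSF⟩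
    rw [hSr]
    intro z hz
    by_cases hzC : z ∈ C
    · have hxK : x ∈ K ⟨S, hSF⟩ := by
        by_contra hx
        have hmem := Set.mem_iInter.mp (hCO hzC) ⟨S, hSF⟩
        rw [if_neg hx] at hmem
        exact hmem hz
      have hyU : y ∈ U ⟨S, hSF⟩ := by
        have hmem := Set.mem_iInter.mp hy ⟨S, hSF⟩
        rwa [if_pos hxK] at hmem
      simpa [hgdef, Set.piecewise, hzC] using hyU
    · have hfS : f ∈ S := Set.mem_sInter.mp hfF S hSF
      rw [hSr] at hfS
      have hfz := hfS hz
      simpa [hgdef, Set.piecewise, hzC] using hfz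
  have hgT : g x ∈ T := hFT hgF
  have hgx : g x = y := by simp [hgdef, Set.piecewise, hxC]
  rwa [hgx] at hgT

end Aux

open Set Filter Topology TopologicalSpace in
/-- `C_k(ω*, ω*)` contains a P-point iff `ω*` contains a P-point. -/
theorem exists_pPoint_continuousMaps_iff :
    (∃ f : C(OmegaStar, OmegaStar), IsPPoint f) ↔ ∃ p : OmegaStar, IsPPoint p := by
  constructor
  · rintro ⟨f, hf⟩
    obtain ⟨x⟩ := (inferInstance : Nonempty OmegaStar)
    refine ⟨f x, ?_⟩
    intro V hV
    have hmem := hf (fun n => (fun g : C(OmegaStar, OmegaStar) => g x) ⁻¹' V n)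
      (fun n => ⟨(hV n).1.preimage (continuous_eval_const x), (hV n).2⟩)
    rw [← Set.preimage_iInter] at hmem
    exact eval_mem_nhds f x hmem
  · rintro ⟨p, hp⟩
    classical
    refine ⟨ContinuousMap.const _ p, ?_⟩
    intro Us hUs
    have hnh : ∀ n, Us n ∈ nhds (ContinuousMap.const OmegaStar p) :=
      fun n => (hUs n).1.mem_nhds (hUs n).2
    choose F hFfin hFsub hmem hsubU using fun n => mem_nhds_compactOpen_iff (hnh n)
    choose K U hK hU hS using fun n (S : F n) => hFsub n S S.2
    set W : ℕ → Set OmegaStar :=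
      fun n => ⋂ S : F n, (if (K n S).Nonempty then U n S else Set.univ) with hW
    have hWopen : ∀ n, IsOpen (W n) := fun n => by
      haveI : Finite (F n) := (hFfin n).to_subtype
      exact isOpen_iInter_of_finite fun S => by
        by_cases h' : (K n S).Nonempty
        · simpa [h'] using hU n S
        · simp [h']
    have hpW : ∀ n, p ∈ W n := fun n => Set.mem_iInter.mpr fun S => by
      by_cases h' : (K n S).Nonempty
      · rw [if_pos h']
        have hfS : (ContinuousMap.const OmegaStar p) ∈ (S : Set C(OmegaStar, OmegaStar)) :=
          Set.mem_sInter.mp (hmem n) S S.2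
        have hSr : (S : Set C(OmegaStar, OmegaStar)) =
            {g : C(OmegaStar, OmegaStar) | Set.MapsTo g (K n S) (U n S)} := hS n S
        rw [hSr] at hfS
        obtain ⟨z, hz⟩ := h'
        simpa using hfS hz
      · simp [h']
    have hiW := hp W fun n => ⟨hWopen n, hpW n⟩
    obtain ⟨O, hOsub, hOopen, hpO⟩ := mem_nhds_iff.mp hiW
    have hbig : {g : C(OmegaStar, OmegaStar) | Set.MapsTo g Set.univ O} ∈
        nhds (ContinuousMap.const OmegaStar p) :=
      (ContinuousMap.isOpen_setOf_mapsTo isCompact_univ hOopen).mem_nhds fun z _ => hpO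
    refine Filter.mem_of_superset hbig ?_
    intro g hg
    refine Set.mem_iInter.mpr fun n => hsubU n ?_
    refine Set.mem_sInter.mpr fun S hSF => ?_
    have hSr : S = {g : C(OmegaStar, OmegaStar) |
        Set.MapsTo g (K n ⟨S, hSF⟩) (U n ⟨S, hSF⟩)} := hS n ⟨S, hSF⟩
    rw [hSr]
    intro z hz
    have hgz : g z ∈ O := hg (Set.mem_univ z)
    have hzW := Set.mem_iInter.mp (Set.mem_iInter.mp (hOsub hgz) n) ⟨S, hSF⟩
    rwa [if_pos ⟨z, hz⟩] at hzW
end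

section
/- Let X be a compact Hausdorff F-space. If A and B are countable subsets of X such that (closure A) ∩ B = ∅ and A ∩ (closure B) = ∅, then (closure A) ∩ (closure B) = ∅. Moreover, if X is in addition totally disconnected (equivalently, zero-dimensional), then there is a clopen set C ⊆ X with A ⊆ C and C ∩ B = ∅. -/
open Set

lemma aux_fun {X : Type*} [TopologicalSpace X] [T1Space X] [NormalSpace X]
    (A B : Set X) (hA : A.Countable) (hd : A ∩ closure B = ∅) :
    ∃ f : X → ℝ, Continuous f ∧ (∀ x, 0 ≤ f x) ∧ (∀ a ∈ A, 0 < f a) ∧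
      ∀ b ∈ closure B, f b = 0 := by
  rcases A.eq_empty_or_nonempty with rfl | hne
  · exact ⟨0, continuous_const, fun x => le_refl 0, fun a ha => ha.elim, fun _ _ => rfl⟩
  obtain ⟨u, hu⟩ := hA.exists_eq_range hne
  have hmem : ∀ n, u n ∉ closure B := by
    intro n hnB
    have : u n ∈ A ∩ closure B := ⟨hu ▸ mem_range_self n, hnB⟩
    simp [hd] at this
  choose g hg0 hg1 hg01 using fun n =>
    exists_continuous_zero_one_of_isClosed isClosed_closure (isClosed_singleton (x := u n))
      (disjoint_singleton_right.2 (hmem n))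
  set F : ℕ → X → ℝ := fun n x => (1/2 : ℝ) ^ n * g n x with hF
  have hbound : ∀ n x, ‖F n x‖ ≤ (1/2 : ℝ) ^ n := by
    intro n x
    rw [hF, norm_mul, norm_pow]
    have h01 := hg01 n x
    have : ‖g n x‖ ≤ 1 := by
      rw [Real.norm_eq_abs, abs_le]; constructor <;> linarith [h01.1, h01.2]
    calc ‖(1/2 : ℝ)‖ ^ n * ‖g n x‖ ≤ ‖(1/2 : ℝ)‖ ^ n * 1 := by
          apply mul_le_mul_of_nonneg_left this (by positivity)
      _ = (1/2 : ℝ) ^ n := by rw [mul_one]; norm_num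
  have hsummable : Summable (fun n => (1/2 : ℝ) ^ n) := summable_geometric_of_lt_one (by norm_num) (by norm_num)
  have hcont : Continuous fun x => ∑' n, F n x :=
    continuous_tsum (fun n => continuous_const.mul (g n).continuous) hsummable hbound
  have hFnonneg : ∀ n x, 0 ≤ F n x := fun n x => by
    have := (hg01 n x).1; positivity
  have hsum_pt : ∀ x, Summable (fun n => F n x) := fun x =>
    Summable.of_nonneg_of_le (fun n => hFnonneg n x)
      (fun n => (le_abs_self _).trans (hbound n x)) hsummable
  refine ⟨fun x => ∑' n, F n x, hcont, fun x => tsum_nonneg (fun n => hFnonneg n x), ?_, ?_⟩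
  · intro a ha
    rw [hu] at ha
    obtain ⟨n, rfl⟩ := ha
    refine Summable.tsum_pos (hsum_pt _) (fun i => hFnonneg i _) n ?_
    have : g n (u n) = 1 := hg1 n rfl
    rw [hF]
    simp only [this, mul_one]
    positivity
  · intro b hb
    have : ∀ n, F n b = 0 := fun n => by
      have : g n b = 0 := hg0 n hb
      simp [hF, this]
    simp [this]

/-- In a compact Hausdorff F-space, countable sets `A`, `B` with `closure A ∩ B = ∅` and
`A ∩ closure B = ∅` have disjoint closures; moreover, if the space is totally disconnected,
some clopen set contains `A` and misses `B`. -/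
theorem fspace_countable_separation
    (X : Type*) [TopologicalSpace X] [CompactSpace X] [T2Space X] (hX : IsFSpace X)
    (A B : Set X) (hA : A.Countable) (hB : B.Countable)
    (h1 : closure A ∩ B = ∅) (h2 : A ∩ closure B = ∅) :
    closure A ∩ closure B = ∅ ∧
    (TotallyDisconnectedSpace X → ∃ C : Set X, IsClopen C ∧ A ⊆ C ∧ C ∩ B = ∅) := by
  obtain ⟨f, hfc, hf0, hfA, hfB⟩ := aux_fun A B hA h2
  obtain ⟨g, hgc, hg0, hgB, hgA⟩ := aux_fun B A hB (by rwa [Set.inter_comm] at h1)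
  -- cozero sets {f > g} and {g > f}
  set U : Set X := {x | f x > g x} with hU
  set V : Set X := {x | g x > f x} with hV
  have key : ∀ a b : ℝ, max (a - b) 0 ≠ 0 ↔ b < a := by
    intro a b
    constructor
    · intro h
      by_contra hle
      push_neg at hle
      exact h (max_eq_right (by linarith))
    · intro h h'
      rw [max_eq_left (by linarith)] at h'
      linarith
  have hUcoz : IsCozero U := by
    refine ⟨fun x => max (f x - g x) 0, (hfc.sub hgc).max continuous_const, ?_⟩
    ext x
    exact (key (f x) (g x)).symm
  have hVcoz : IsCozero V := by
    refine ⟨fun x => max (g x - f x) 0, (hgc.sub hfc).max continuous_const, ?_⟩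
    ext x
    exact (key (g x) (f x)).symm
  have hdisj : U ∩ V = ∅ := by
    ext x; simp only [hU, hV, mem_inter_iff, mem_setOf_eq, mem_empty_iff_false, iff_false]
    rintro ⟨h1', h2'⟩; linarith
  obtain ⟨h, hhc, hhU, hhV⟩ := hX U V hUcoz hVcoz hdisj
  have hAU : A ⊆ U := by
    intro a ha
    have : g a = 0 := hgA a (subset_closure ha)
    simp only [hU, mem_setOf_eq, this]
    exact hfA a ha
  have hBV : B ⊆ V := by
    intro b hb
    have : f b = 0 := hfB b (subset_closure hb)
    simp only [hV, mem_setOf_eq, this]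
    exact hgB b hb
  have hhA : ∀ a ∈ closure A, h a = 0 := by
    intro a ha
    have : closure A ⊆ h ⁻¹' {0} := by
      apply closure_minimal _ (IsClosed.preimage hhc isClosed_singleton)
      intro x hx; exact hhU x (hAU hx)
    exact this ha
  have hhB : ∀ b ∈ closure B, h b = 1 := by
    intro b hb
    have : closure B ⊆ h ⁻¹' {1} := by
      apply closure_minimal _ (IsClosed.preimage hhc isClosed_singleton)
      intro x hx; exact hhV x (hBV hx)
    exact this hb
  have hclos : closure A ∩ closure B = ∅ := by
    ext x
    simp only [mem_inter_iff, mem_empty_iff_false, iff_false]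
    rintro ⟨hxA, hxB⟩
    have := hhA x hxA
    have := hhB x hxB
    linarith
  refine ⟨hclos, fun hTD => ?_⟩
  -- clopen separation in compact Hausdorff totally disconnected space
  have hKc : IsCompact (closure A) := isClosed_closure.isCompact
  have hopen : IsOpen (closure B)ᶜ := isClosed_closure.isOpen_compl
  have hsub : closure A ⊆ (closure B)ᶜ := by
    intro x hx hxB
    have : x ∈ closure A ∩ closure B := ⟨hx, hxB⟩
    simp [hclos] at this
  choose! W hW hxW hWsub using fun x (hx : x ∈ closure A) =>
    compact_exists_isClopen_in_isOpen hopen (hsub hx)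
  obtain ⟨t, ht⟩ := hKc.elim_finite_subcover (fun x : closure A => W x)
    (fun x => (hW x x.2).2) (fun x hx => mem_iUnion.2 ⟨⟨x, hx⟩, hxW _ (Subtype.coe_prop _)⟩)
  refine ⟨⋃ i ∈ t, W i, ?_, ?_, ?_⟩
  · exact Set.Finite.isClopen_biUnion t.finite_toSet (fun i _ => hW i i.2)
  · exact fun a ha => ht (subset_closure ha)
  · ext x
    simp only [mem_inter_iff, mem_iUnion, mem_empty_iff_false, iff_false]
    rintro ⟨⟨i, hi, hxW'⟩, hxB⟩
    exact hWsub i i.2 hxW' (subset_closure hxB)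
end

section
/- Let X be a compact Hausdorff F-space, let f ∈ C(X,X) and f_n ∈ C(X,X) for n ∈ ℕ, and let p_n ∈ X for n ∈ ℕ. Set P = {p_n | n ∈ ℕ}, A = f '' P and B = {f_n p_n | n ∈ ℕ}. If (closure A) ∩ B = ∅ and A ∩ (closure B) = ∅, then f does not belong to the closure of {f_n | n ∈ ℕ} in C_k(X,X). -/
open Set


lemma max_ne_zero_iff' {a : ℝ} : max a 0 ≠ 0 ↔ 0 < a := by
  rw [ne_eq, max_eq_right_iff, not_le]

lemma isCozero_iUnion {X : Type*} [TopologicalSpace X] (u : ℕ → X → ℝ)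
    (hu : ∀ n, Continuous (u n)) : IsCozero {x | ∃ n, u n x ≠ 0} := by
  set w : ℕ → X → ℝ := fun n x => (1/2 : ℝ) ^ n * min |u n x| 1 with hw
  have hwc : ∀ n, Continuous (w n) := fun n =>
    continuous_const.mul (((hu n).abs).min continuous_const)
  have hwnn : ∀ n x, 0 ≤ w n x := fun n x =>
    mul_nonneg (by positivity) (le_min (abs_nonneg _) one_pos.le)
  have hwle : ∀ n x, ‖w n x‖ ≤ (1/2 : ℝ) ^ n := by
    intro n x
    rw [Real.norm_of_nonneg (hwnn n x)]
    calc (1/2 : ℝ) ^ n * min |u n x| 1 ≤ (1/2 : ℝ) ^ n * 1 :=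
          mul_le_mul_of_nonneg_left (min_le_right _ _) (by positivity)
      _ = (1/2 : ℝ) ^ n := mul_one _
  have hsum : ∀ x, Summable fun n => w n x := fun x =>
    Summable.of_nonneg_of_le (fun n => hwnn n x)
      (fun n => (Real.norm_of_nonneg (hwnn n x)) ▸ hwle n x) summable_geometric_two
  refine ⟨fun x => ∑' n, w n x, continuous_tsum hwc summable_geometric_two hwle, ?_⟩
  ext x
  simp only [mem_setOf_eq]
  constructor
  · rintro ⟨n, hn⟩
    have h0 : 0 < w n x := by
      have : 0 < |u n x| := abs_pos.mpr hn
      have : 0 < min |u n x| 1 := lt_min this one_pos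
      positivity
    exact (Summable.tsum_pos (hsum x) (fun i => hwnn i x) n h0).ne'
  · intro h
    by_contra hc
    push_neg at hc
    apply h
    have : (fun n => w n x) = fun _ => (0:ℝ) := by
      funext n; simp [hw, hc n]
    rw [this, tsum_zero]

/-- Convergence Lemma: in a compact Hausdorff F-space `X`, given `f`, a sequence `fₙ` in
`C(X, X)` and points `pₙ`, let `A = f '' {pₙ}` and `B = {fₙ pₙ}`. If `closure A ∩ B = ∅` and
`A ∩ closure B = ∅`, then `f` is not in the closure of `{fₙ | n}` in `C_k(X, X)`. -/
theorem convergence_lemma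
    (X : Type*) [TopologicalSpace X] [CompactSpace X] [T2Space X] (hX : IsFSpace X)
    (f : C(X, X)) (F : ℕ → C(X, X)) (p : ℕ → X)
    (h1 : closure ((f : X → X) '' Set.range p) ∩ Set.range (fun n => F n (p n)) = ∅)
    (h2 : (f : X → X) '' Set.range p ∩ closure (Set.range (fun n => F n (p n))) = ∅) :
    f ∉ closure (Set.range F) := by
  set A : Set X := (f : X → X) '' Set.range p with hA
  set B : Set X := Set.range (fun n => F n (p n)) with hB
  set a : ℕ → X := fun n => f (p n) with ha
  set b : ℕ → X := fun n => F n (p n) with hb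
  have haA : ∀ n, a n ∈ A := fun n => ⟨p n, mem_range_self n, rfl⟩
  have hbB : ∀ n, b n ∈ B := fun n => mem_range_self n
  -- a n ∉ closure B, b n ∉ closure A
  have haD : ∀ n, a n ∉ closure B := fun n hn =>
    (Set.eq_empty_iff_forall_notMem.mp h2) (a n) ⟨haA n, hn⟩
  have hbC : ∀ n, b n ∉ closure A := fun n hn =>
    (Set.eq_empty_iff_forall_notMem.mp h1) (b n) ⟨hn, hbB n⟩
  -- Urysohn functions
  have hg : ∀ n : ℕ, ∃ g : C(X, ℝ), EqOn g 0 (closure B) ∧ g (a n) = 1 := by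
    intro n
    obtain ⟨g, hg0, hg1, _⟩ := exists_continuous_zero_one_of_isClosed
      isClosed_closure (isClosed_singleton (x := a n))
      (Set.disjoint_singleton_right.mpr (haD n))
    exact ⟨g, hg0, hg1 rfl⟩
  have hh : ∀ n : ℕ, ∃ h : C(X, ℝ), EqOn h 0 (closure A) ∧ h (b n) = 1 := by
    intro n
    obtain ⟨h, hh0, hh1, _⟩ := exists_continuous_zero_one_of_isClosed
      isClosed_closure (isClosed_singleton (x := b n))
      (Set.disjoint_singleton_right.mpr (hbC n))
    exact ⟨h, hh0, hh1 rfl⟩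
  choose g hg0 hg1 using hg
  choose k hk0 hk1 using hh
  -- the cozero neighbourhoods
  set u : ℕ → X → ℝ := fun n x =>
    max (g n x - 1/2) 0 * ∏ m ∈ Finset.range n, max (1/2 - k m x) 0 with hu
  set v : ℕ → X → ℝ := fun m x =>
    max (k m x - 1/2) 0 * ∏ n ∈ Finset.range (m+1), max (1/2 - g n x) 0 with hv
  have huc : ∀ n, Continuous (u n) := by
    intro n
    exact (((g n).continuous.sub continuous_const).max continuous_const).mul
      (continuous_finset_prod _ fun m _ =>
        (continuous_const.sub (k m).continuous).max continuous_const)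
  have hvc : ∀ m, Continuous (v m) := by
    intro m
    exact (((k m).continuous.sub continuous_const).max continuous_const).mul
      (continuous_finset_prod _ fun n _ =>
        (continuous_const.sub (g n).continuous).max continuous_const)
  have huiff : ∀ n x, u n x ≠ 0 ↔ 1/2 < g n x ∧ ∀ m < n, k m x < 1/2 := by
    intro n x
    rw [hu, mul_ne_zero_iff, Finset.prod_ne_zero_iff]
    simp only [max_ne_zero_iff', sub_pos, Finset.mem_range]
  have hviff : ∀ m x, v m x ≠ 0 ↔ 1/2 < k m x ∧ ∀ n < m + 1, g n x < 1/2 := by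
    intro m x
    rw [hv, mul_ne_zero_iff, Finset.prod_ne_zero_iff]
    simp only [max_ne_zero_iff', sub_pos, Finset.mem_range]
  set U : Set X := {x | ∃ n, u n x ≠ 0} with hU
  set V : Set X := {x | ∃ m, v m x ≠ 0} with hV
  have hAU : A ⊆ U := by
    rintro _ ⟨_, ⟨n, rfl⟩, rfl⟩
    refine ⟨n, (huiff n (a n)).mpr ⟨?_, fun m _ => ?_⟩⟩
    · rw [hg1 n]; norm_num
    · rw [hk0 m (subset_closure (haA n))]; norm_num
  have hBV : B ⊆ V := by
    rintro _ ⟨m, rfl⟩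
    refine ⟨m, (hviff m (b m)).mpr ⟨?_, fun n _ => ?_⟩⟩
    · rw [hk1 m]; norm_num
    · rw [hg0 n (subset_closure (hbB m))]; norm_num
  have hUV : U ∩ V = ∅ := by
    rw [Set.eq_empty_iff_forall_notMem]
    rintro x ⟨⟨n, hn⟩, ⟨m, hm⟩⟩
    obtain ⟨hgn, hkn⟩ := (huiff n x).mp hn
    obtain ⟨hkm, hgm⟩ := (hviff m x).mp hm
    rcases lt_or_ge m n with hmn | hmn
    · exact absurd hkm (not_lt.mpr (hkn m hmn).le)
    · exact absurd hgn (not_lt.mpr (hgm n (Nat.lt_succ_of_le hmn)).le)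
  obtain ⟨h, hhc, hh0, hh1⟩ := hX U V (isCozero_iUnion u huc) (isCozero_iUnion v hvc) hUV
  -- h = 0 on closure A
  have hhA : ∀ x ∈ closure A, h x = 0 := by
    have : closure A ⊆ h ⁻¹' {0} :=
      closure_minimal (fun x hx => hh0 x (hAU hx)) (isClosed_singleton.preimage hhc)
    exact fun x hx => this hx
  -- the compact-open argument
  set K : Set X := closure (Set.range p) with hK
  have hKc : IsCompact K := isClosed_closure.isCompact
  set O : Set X := {y | h y < 1/2} with hO
  have hOopen : IsOpen O := isOpen_lt hhc continuous_const
  set W : Set C(X, X) := {q | Set.MapsTo q K O} with hW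
  have hWopen : IsOpen W := ContinuousMap.isOpen_setOf_mapsTo hKc hOopen
  have hfW : f ∈ W := by
    intro x hx
    have : f x ∈ closure A := by
      have hsub : (f : X → X) '' closure (Set.range p) ⊆ closure A :=
        image_closure_subset_closure_image f.continuous
      exact hsub ⟨x, hx, rfl⟩
    show h (f x) < 1/2
    rw [hhA _ this]; norm_num
  intro hcl
  obtain ⟨q, hqW, n, rfl⟩ := mem_closure_iff.mp hcl W hWopen hfW
  have hpK : p n ∈ K := subset_closure (mem_range_self n)
  have : h (F n (p n)) < 1/2 := hqW hpK
  rw [hh1 _ (hBV (hbB n))] at this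
  norm_num at this
end

section
/- Let X be a compact Hausdorff space, suppose the sequence (f_n) converges to f in C_k(X,X), and let p_n ∈ X for n ∈ ℕ. Set P = {p_n | n ∈ ℕ}, A = f '' P and B = {f_n p_n | n ∈ ℕ}. Then: (1) closure A = f '' (closure P); (2) every accumulation point of A belongs to the closure of B; (3) every accumulation point of B belongs to the closure of A. -/
open Filter Set Topology

/-- If `x` is an accumulation point of the range of `g : ℕ → X` in a T1 space, then for every
open neighbourhood `V` of `x`, infinitely many `n` satisfy `g n ∈ V` and `g n ≠ x`. -/
lemma aux_infinite_indices {X : Type*} [TopologicalSpace X] [T1Space X] (g : ℕ → X) (x : X)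
    (h : x ∈ closure (Set.range g \ {x})) {V : Set X} (hV : IsOpen V) (hx : x ∈ V) :
    {n | g n ∈ V ∧ g n ≠ x}.Infinite := by
  intro hfin
  have hK : (g '' {n | g n ∈ V ∧ g n ≠ x}).Finite := hfin.image g
  have hnhds : V \ (g '' {n | g n ∈ V ∧ g n ≠ x}) ∈ 𝓝 x := by
    refine (hV.sdiff hK.isClosed).mem_nhds ⟨hx, ?_⟩
    rintro ⟨n, hn, rfl⟩
    exact hn.2 rfl
  rcases mem_closure_iff_nhds.mp h _ hnhds with ⟨y, ⟨hyV, hyK⟩, ⟨n, rfl⟩, hyx⟩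
  exact hyK ⟨n, ⟨hyV, hyx⟩, rfl⟩

/-- Let `X` be compact Hausdorff, let `fₙ → f` in `C_k(X, X)` and let `pₙ ∈ X`. With
`P = {pₙ}`, `A = f '' P`, `B = {fₙ pₙ}`: (1) `closure A = f '' closure P`; (2) every
accumulation point of `A` lies in `closure B`; (3) every accumulation point of `B` lies in
`closure A`. -/
theorem closure_image_and_accumulation_points
    (X : Type*) [TopologicalSpace X] [CompactSpace X] [T2Space X]
    (F : ℕ → C(X, X)) (f : C(X, X))
    (hconv : Filter.Tendsto F Filter.atTop (nhds f)) (p : ℕ → X) :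
    closure ((f : X → X) '' Set.range p) = (f : X → X) '' closure (Set.range p) ∧
    (∀ x : X, x ∈ closure (((f : X → X) '' Set.range p) \ {x}) →
      x ∈ closure (Set.range (fun n => F n (p n)))) ∧
    (∀ x : X, x ∈ closure ((Set.range (fun n => F n (p n))) \ {x}) →
      x ∈ closure ((f : X → X) '' Set.range p)) := by
  letI : UniformSpace X := uniformSpaceOfCompactR1
  have h1 : closure ((f : X → X) '' Set.range p) = (f : X → X) '' closure (Set.range p) := by
    apply Set.Subset.antisymm
    · exact closure_minimal (Set.image_mono subset_closure)
        ((isClosed_closure.isCompact.image f.continuous).isClosed)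
    · exact image_closure_subset_closure_image f.continuous
  have huc : TendstoUniformly (fun n a => F n a) f atTop :=
    ContinuousMap.tendsto_iff_tendstoUniformly.mp hconv
  have hrange : (f : X → X) '' Set.range p = Set.range (fun n => f (p n)) := by
    rw [← Set.range_comp]; rfl
  refine ⟨h1, ?_, ?_⟩
  · -- accumulation points of A lie in closure B
    intro x hx
    rw [mem_closure_iff_nhds]
    intro U hU
    obtain ⟨W0, hW0, hW0U⟩ := UniformSpace.mem_nhds_iff.mp hU
    obtain ⟨W, hW, _hWsymm, hWW⟩ := comp_symm_mem_uniformity_sets hW0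
    obtain ⟨V, hVsub, hVopen, hxV⟩ :=
      mem_nhds_iff.mp (UniformSpace.ball_mem_nhds x hW)
    rw [hrange] at hx
    have hinf := aux_infinite_indices (fun n => f (p n)) x hx hVopen hxV
    obtain ⟨N, hN⟩ := eventually_atTop.mp (huc W hW)
    obtain ⟨n, hn, hNn⟩ := hinf.exists_gt N
    refine ⟨F n (p n), hW0U ?_, ⟨n, rfl⟩⟩
    exact hWW ⟨f (p n), hVsub hn.1, hN n hNn.le (p n)⟩
  · -- accumulation points of B lie in closure A
    intro x hx
    rw [mem_closure_iff_nhds]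
    intro U hU
    obtain ⟨W0, hW0, hW0U⟩ := UniformSpace.mem_nhds_iff.mp hU
    obtain ⟨W, hW, hWsymm, hWW⟩ := comp_symm_mem_uniformity_sets hW0
    obtain ⟨V, hVsub, hVopen, hxV⟩ :=
      mem_nhds_iff.mp (UniformSpace.ball_mem_nhds x hW)
    have hinf := aux_infinite_indices (fun n => F n (p n)) x hx hVopen hxV
    obtain ⟨N, hN⟩ := eventually_atTop.mp (huc W hW)
    obtain ⟨n, hn, hNn⟩ := hinf.exists_gt N
    refine ⟨f (p n), hW0U ?_, Set.mem_image_of_mem _ ⟨n, rfl⟩⟩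
    exact hWW ⟨F n (p n), hVsub hn.1, hWsymm.symm _ _ (hN n hNn.le (p n))⟩
end
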